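/- arXiv:1505.01424 — 6 statements merged into one kernel-verified Lean document; each statement's English description precedes it below -/
import Mathlib

section
/- Let G and H be connected graphs, neither of which is a tree. Then max{|E(G)|·|V(H)|, |E(H)|·|V(G)|} + 2 ≤ mc(G □ H) ≤ |E(G)|·|V(H)| + (|E(H)| − 1)·|V(G)| + 1. -/
open SimpleGraph

/-- An edge-coloring `c` of `G` is a *monochromatic connection coloring* (MC-coloring)
if any two vertices of `G` are joined by a monochromatic walk, i.e. a walk all of whose
edges receive the same color. -/
def SimpleGraph.IsMCColoring {V : Type*} (G : SimpleGraph V) (c : Sym2 V → ℕ) : Prop :=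
  ∀ u v : V, ∃ w : G.Walk u v, ∃ k : ℕ, ∀ e ∈ w.edges, c e = k

/-- The *monochromatic connection number* `mc G`: the maximum number of colors used
on the edges of `G` by an MC-coloring of `G`. -/
noncomputable def SimpleGraph.mc {V : Type*} (G : SimpleGraph V) : ℕ :=
  sSup {n | ∃ c : Sym2 V → ℕ, G.IsMCColoring c ∧ (c '' G.edgeSet).ncard = n}

/-- The lexicographic product `G ∘ H`: `(g,h)` and `(g',h')` are adjacent iff
`gg' ∈ E(G)`, or `g = g'` and `hh' ∈ E(H)`. -/
def SimpleGraph.lexProd {α β : Type*} (G : SimpleGraph α) (H : SimpleGraph β) :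
    SimpleGraph (α × β) where
  Adj x y := G.Adj x.1 y.1 ∨ (x.1 = y.1 ∧ H.Adj x.2 y.2)
  symm := by
    constructor
    rintro x y (h | ⟨h1, h2⟩)
    · exact Or.inl h.symm
    · exact Or.inr ⟨h1.symm, h2.symm⟩
  loopless := by
    constructor
    rintro x (h | ⟨-, h⟩)
    · exact G.loopless.irrefl _ h
    · exact H.loopless.irrefl _ h

/-- The strong product `G ⊠ H`: `(g,h)` and `(g',h')` are adjacent iff
`gg' ∈ E(G)` and `h = h'`, or `g = g'` and `hh' ∈ E(H)`, or `gg' ∈ E(G)` and `hh' ∈ E(H)`. -/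
def SimpleGraph.strongProd {α β : Type*} (G : SimpleGraph α) (H : SimpleGraph β) :
    SimpleGraph (α × β) where
  Adj x y := (G.Adj x.1 y.1 ∧ x.2 = y.2) ∨ (x.1 = y.1 ∧ H.Adj x.2 y.2) ∨
      (G.Adj x.1 y.1 ∧ H.Adj x.2 y.2)
  symm := by
    constructor
    rintro x y (⟨h1, h2⟩ | ⟨h1, h2⟩ | ⟨h1, h2⟩)
    · exact Or.inl ⟨h1.symm, h2.symm⟩
    · exact Or.inr (Or.inl ⟨h1.symm, h2.symm⟩)
    · exact Or.inr (Or.inr ⟨h1.symm, h2.symm⟩)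
  loopless := by
    constructor
    rintro x (⟨h, -⟩ | ⟨-, h⟩ | ⟨h, -⟩)
    · exact G.loopless.irrefl _ h
    · exact H.loopless.irrefl _ h
    · exact G.loopless.irrefl _ h

/-- The direct (tensor) product `G × H`: `(g,h)` and `(g',h')` are adjacent iff
`gg' ∈ E(G)` and `hh' ∈ E(H)`. -/
def SimpleGraph.tensorProd {α β : Type*} (G : SimpleGraph α) (H : SimpleGraph β) :
    SimpleGraph (α × β) where
  Adj x y := G.Adj x.1 y.1 ∧ H.Adj x.2 y.2
  symm := by
    constructor
    rintro x y ⟨h1, h2⟩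
    exact ⟨h1.symm, h2.symm⟩
  loopless := by
    constructor
    rintro x ⟨h, -⟩
    exact G.loopless.irrefl _ h

/-- The Cartesian (box) product of a finite family of graphs: two tuples are adjacent
iff they agree in all coordinates but one, where they are adjacent. -/
def SimpleGraph.piBoxProd {n : ℕ} {V : Fin n → Type*} (G : ∀ i, SimpleGraph (V i)) :
    SimpleGraph (∀ i, V i) where
  Adj x y := ∃ i, (G i).Adj (x i) (y i) ∧ ∀ j, j ≠ i → x j = y j
  symm := by
    constructor
    rintro x y ⟨i, hadj, heq⟩
    exact ⟨i, hadj.symm, fun j hj => (heq j hj).symm⟩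
  loopless := by
    constructor
    rintro x ⟨i, hadj, -⟩
    exact (G i).loopless.irrefl _ hadj

/-- The (iterated, left-associated) lexicographic product of a finite family of graphs:
two tuples are adjacent iff at the least coordinate where they differ,
they are adjacent. -/
def SimpleGraph.piLexProd {n : ℕ} {V : Fin n → Type*} (G : ∀ i, SimpleGraph (V i)) :
    SimpleGraph (∀ i, V i) where
  Adj x y := ∃ i, (G i).Adj (x i) (y i) ∧ ∀ j, j < i → x j = y j
  symm := by
    constructor
    rintro x y ⟨i, hadj, heq⟩
    exact ⟨i, hadj.symm, fun j hj => (heq j hj).symm⟩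
  loopless := by
    constructor
    rintro x ⟨i, hadj, -⟩
    exact (G i).loopless.irrefl _ hadj

section MCAux

open Finset

variable {V : Type*}

private lemma mcAux_parent (K : SimpleGraph V) {r v : V} (h : K.Reachable r v) (hne : v ≠ r) :
    ∃ p, K.Adj p v ∧ K.dist r p + 1 = K.dist r v := by
  obtain ⟨w, hw⟩ := h.symm.exists_walk_length_eq_dist
  cases w with
  | nil => exact absurd rfl hne
  | @cons _ b _ ha q =>
      refine ⟨b, ha.symm, ?_⟩
      have h1 : K.dist r b ≤ q.length := by
        rw [K.dist_comm]; exact SimpleGraph.dist_le q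
      have h2 : K.dist r v ≤ K.dist r b + 1 := by
        obtain ⟨w2, hw2⟩ := (h.trans ⟨Walk.cons ha Walk.nil⟩).exists_walk_length_eq_dist
        have := SimpleGraph.dist_le (w2.concat ha.symm)
        rwa [Walk.length_concat, hw2] at this
      have h3 : K.dist r v = q.length + 1 := by
        rw [K.dist_comm]; rw [← hw]; simp [Walk.length_cons]
      omega

private lemma mcAux_reach [DecidableEq V] (K : SimpleGraph V) (A : Finset (Sym2 V))
    (u : V) (S : Finset V)
    (hw : ∀ v ∈ S, ∃ w : K.Walk u v, ∀ e ∈ w.edges, e ∈ A) :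
    ∀ v ∈ S, (SimpleGraph.fromEdgeSet (↑A : Set (Sym2 V))).Reachable u v := by
  intro v hv
  obtain ⟨w, hwe⟩ := hw v hv
  refine ⟨w.transfer _ (fun e he => ?_)⟩
  rw [edgeSet_fromEdgeSet]
  exact ⟨hwe e he, K.not_isDiag_of_mem_edgeSet (w.edges_subset_edgeSet he)⟩

private lemma mcAux_card0 [DecidableEq V] (K : SimpleGraph V) (A : Finset (Sym2 V))
    (hA : ∀ e ∈ A, e ∈ K.edgeSet) (u : V) (S : Finset V) (hu : u ∉ S)
    (hw : ∀ v ∈ S, ∃ w : K.Walk u v, ∀ e ∈ w.edges, e ∈ A) :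
    S.card ≤ A.card := by
  classical
  set F := SimpleGraph.fromEdgeSet (↑A : Set (Sym2 V)) with hF
  have hpar : ∀ v ∈ S, ∃ p, F.Adj p v ∧ F.dist u p + 1 = F.dist u v := fun v hv =>
    mcAux_parent F (mcAux_reach K A u S hw v hv) (fun h => hu (h ▸ hv))
  choose! p hp1 hp2 using hpar
  have hmaps : ∀ v ∈ S, s(v, p v) ∈ A := by
    intro v hv
    have h1 : s(v, p v) ∈ F.edgeSet := (F.mem_edgeSet).2 ((hp1 v hv).symm)
    rw [hF, edgeSet_fromEdgeSet] at h1
    exact h1.1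
  have hinj : Set.InjOn (fun v => s(v, p v)) S := by
    intro a ha b hb hab
    by_contra hne'
    simp only [Sym2.eq_iff] at hab
    rcases hab with ⟨rfl, -⟩ | ⟨h1, h2⟩
    · exact hne' rfl
    · have da := hp2 a ha
      have db := hp2 b hb
      rw [h2] at da
      rw [← h1] at db
      omega
  calc S.card = (S.image (fun v => s(v, p v))).card := (Finset.card_image_of_injOn hinj).symm
    _ ≤ A.card := Finset.card_le_card (by
        intro e he
        obtain ⟨v, hv, rfl⟩ := Finset.mem_image.1 he
        exact hmaps v hv)

private lemma mcAux_card [DecidableEq V] (K : SimpleGraph V) (A : Finset (Sym2 V))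
    (hA : ∀ e ∈ A, e ∈ K.edgeSet) (u : V) (S : Finset V) (hu : u ∉ S)
    (hw : ∀ v ∈ S, ∃ w : K.Walk u v, ∀ e ∈ w.edges, e ∈ A)
    (hadj : ∀ v ∈ S, ¬ K.Adj u v) (hne : S.Nonempty) : S.card + 1 ≤ A.card := by
  classical
  set F := SimpleGraph.fromEdgeSet (↑A : Set (Sym2 V)) with hF
  have hFK : ∀ {a b : V}, F.Adj a b → K.Adj a b := by
    intro a b hab
    rw [hF, fromEdgeSet_adj] at hab
    exact (K.mem_edgeSet).1 (hA _ hab.1)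
  have hpar : ∀ v ∈ S, ∃ p, F.Adj p v ∧ F.dist u p + 1 = F.dist u v := fun v hv =>
    mcAux_parent F (mcAux_reach K A u S hw v hv) (fun h => hu (h ▸ hv))
  choose! p hp1 hp2 using hpar
  have hmaps : ∀ v ∈ S, s(v, p v) ∈ A := by
    intro v hv
    have h1 : s(v, p v) ∈ F.edgeSet := (F.mem_edgeSet).2 ((hp1 v hv).symm)
    rw [hF, edgeSet_fromEdgeSet] at h1
    exact h1.1
  have hinj : Set.InjOn (fun v => s(v, p v)) S := by
    intro a ha b hb hab
    by_contra hne'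
    simp only [Sym2.eq_iff] at hab
    rcases hab with ⟨rfl, -⟩ | ⟨h1, h2⟩
    · exact hne' rfl
    · have da := hp2 a ha
      have db := hp2 b hb
      rw [h2] at da
      rw [← h1] at db
      omega
  obtain ⟨v0, hv0⟩ := hne
  obtain ⟨z, hz⟩ : ∃ z, F.Adj u z := by
    obtain ⟨w⟩ := mcAux_reach K A u S hw v0 hv0
    cases w with
    | nil => exact absurd hv0 hu
    | cons h q => exact ⟨_, h⟩
  have hz0 : s(u, z) ∈ A := by
    have h1 : s(u, z) ∈ F.edgeSet := (F.mem_edgeSet).2 hz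
    rw [hF, edgeSet_fromEdgeSet] at h1
    exact h1.1
  have hnotmem : s(u, z) ∉ S.image (fun v => s(v, p v)) := by
    simp only [Finset.mem_image]
    rintro ⟨v, hv, hEq⟩
    rw [Sym2.eq_iff] at hEq
    rcases hEq with ⟨h1, h2⟩ | ⟨h1, h2⟩
    · exact hu (h1 ▸ hv)
    · subst h1
      exact hadj v hv (hFK hz)
  have hsub : insert s(u, z) (S.image (fun v => s(v, p v))) ⊆ A := by
    intro e he
    rcases Finset.mem_insert.1 he with rfl | he
    · exact hz0
    · obtain ⟨v, hv, rfl⟩ := Finset.mem_image.1 he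
      exact hmaps v hv
  calc S.card + 1 = (insert s(u, z) (S.image (fun v => s(v, p v)))).card := by
        rw [Finset.card_insert_of_notMem hnotmem, Finset.card_image_of_injOn hinj]
    _ ≤ A.card := Finset.card_le_card hsub

private lemma mcAux_conn_card [Fintype V] (K : SimpleGraph V) (hK : K.Connected) :
    Fintype.card V ≤ K.edgeSet.ncard + 1 := by
  classical
  obtain ⟨u⟩ := hK.nonempty
  have h := mcAux_card0 K K.edgeSet.toFinite.toFinset
    (fun e he => (Set.Finite.mem_toFinset _).1 he) u (Finset.univ.erase u)
    (by simp)
    (fun v hv => by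
      obtain ⟨w⟩ := hK u v
      exact ⟨w, fun e he => (Set.Finite.mem_toFinset _).2 (w.edges_subset_edgeSet he)⟩)
  rw [Finset.card_erase_of_mem (Finset.mem_univ u), Finset.card_univ] at h
  rw [Set.ncard_eq_toFinset_card']
  rw [← Set.toFinite_toFinset K.edgeSet]
  omega

private lemma mcAux_reach_del (K : SimpleGraph V) {a b : V}
    (hre : (K.deleteEdges {s(a, b)}).Reachable a b) {x y : V} (h : K.Reachable x y) :
    (K.deleteEdges {s(a, b)}).Reachable x y := by
  obtain ⟨w⟩ := h
  induction w with
  | nil => exact Reachable.refl _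
  | @cons c d e hcd q ih =>
      refine Reachable.trans ?_ ih
      by_cases hce : s(c, d) = s(a, b)
      · rw [Sym2.eq_iff] at hce
        rcases hce with ⟨rfl, rfl⟩ | ⟨rfl, rfl⟩
        · exact hre
        · exact hre.symm
      · exact ⟨Walk.cons (SimpleGraph.deleteEdges_adj.mpr ⟨hcd, by simpa using hce⟩) Walk.nil⟩

private lemma mcAux_nontree_card [Fintype V] (K : SimpleGraph V) (hK : K.Connected)
    (ht : ¬ K.IsTree) : Fintype.card V ≤ K.edgeSet.ncard := by
  classical
  have hnac : ¬ K.IsAcyclic := fun h => ht ⟨hK, h⟩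
  rw [SimpleGraph.IsAcyclic] at hnac
  push_neg at hnac
  obtain ⟨v, c, hc⟩ := hnac
  obtain ⟨a, b, e, hab, rfl, hadj⟩ : ∃ a b, ∃ e ∈ c.edges, e = s(a, b) ∧ K.Adj a b := by
    cases c with
    | nil => exact absurd hc (by simp [Walk.IsCycle])
    | @cons _ d _ h q => exact ⟨v, d, s(v, d), by simp, rfl, h⟩
  have key := (SimpleGraph.adj_and_reachable_delete_edges_iff_exists_cycle (G := K)
    (v := a) (w := b)).2 ⟨v, c, hc, hab⟩
  have hre : (K.deleteEdges {s(a, b)}).Reachable a b := key.2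
  have hconn' : (K.deleteEdges {s(a, b)}).Connected := by
    have := hK.nonempty
    exact SimpleGraph.Connected.mk (fun x y => mcAux_reach_del K hre (hK x y))
  have h1 := mcAux_conn_card _ hconn'
  rw [SimpleGraph.edgeSet_deleteEdges] at h1
  have h2 : (K.edgeSet \ {s(a, b)}).ncard + 1 = K.edgeSet.ncard :=
    Set.ncard_diff_singleton_add_one (K.mem_edgeSet.2 hadj) (K.edgeSet.toFinite)
  omega

private lemma mcAux_boxProd_card {α β : Type*} [Fintype α] [Fintype β]
    (G : SimpleGraph α) (H : SimpleGraph β) :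
    (G.boxProd H).edgeSet.ncard =
      G.edgeSet.ncard * Fintype.card β + H.edgeSet.ncard * Fintype.card α := by
  classical
  letI : DecidableRel G.Adj := Classical.decRel _
  letI : DecidableRel H.Adj := Classical.decRel _
  letI : DecidableRel (G.boxProd H).Adj := Classical.decRel _
  have hG := G.sum_degrees_eq_twice_card_edges
  have hH := H.sum_degrees_eq_twice_card_edges
  have hK := (G.boxProd H).sum_degrees_eq_twice_card_edges
  have hK2 : ∑ x : α × β, (G.degree x.1 + H.degree x.2)
      = 2 * (G.boxProd H).edgeFinset.card := by
    rw [← hK]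
    refine Finset.sum_congr rfl fun v _ => ?_
    symm
    convert SimpleGraph.degree_boxProd (G := G) (H := H) v
  rw [Fintype.sum_prod_type] at hK2
  simp only [Finset.sum_add_distrib, Finset.sum_const, Finset.card_univ, smul_eq_mul,
    ← Finset.mul_sum, ← Finset.sum_mul] at hK2
  rw [show (∑ x : α, ∑ _x : β, G.degree x) = Fintype.card β * (2 * G.edgeFinset.card) by
      rw [← hG, Finset.mul_sum]; simp,
    show (∑ _x : α, ∑ y : β, H.degree y) = Fintype.card α * (2 * H.edgeFinset.card) by
      rw [← hH]; simp] at hK2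
  have cG : G.edgeSet.ncard = G.edgeFinset.card := Set.ncard_eq_toFinset_card' _
  have cH : H.edgeSet.ncard = H.edgeFinset.card := Set.ncard_eq_toFinset_card' _
  have cK : (G.boxProd H).edgeSet.ncard = (G.boxProd H).edgeFinset.card :=
    Set.ncard_eq_toFinset_card' _
  rw [cG, cH, cK]
  have h2 : Fintype.card β * (2 * G.edgeFinset.card) + Fintype.card α * (2 * H.edgeFinset.card)
      = 2 * (G.edgeFinset.card * Fintype.card β + H.edgeFinset.card * Fintype.card α) := by
    ring
  rw [h2] at hK2
  omega

private lemma mcAux_lower [Fintype V] (K : SimpleGraph V) (hK : K.Connected)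
    (hV : 2 ≤ Fintype.card V) :
    ∃ c : Sym2 V → ℕ, K.IsMCColoring c ∧
      K.edgeSet.ncard + 2 ≤ (c '' K.edgeSet).ncard + Fintype.card V := by
  classical
  obtain ⟨r⟩ := hK.nonempty
  have hpar : ∀ v : V, v ≠ r → ∃ p, K.Adj p v ∧ K.dist r p + 1 = K.dist r v :=
    fun v hv => mcAux_parent K (hK r v) hv
  choose! p hp1 hp2 using hpar
  set T : Finset (Sym2 V) := (Finset.univ.erase r).image (fun v => s(v, p v)) with hT
  have hTE : ∀ e ∈ T, e ∈ K.edgeSet := by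
    intro e he
    obtain ⟨v, hv, rfl⟩ := Finset.mem_image.1 he
    exact K.mem_edgeSet.2 ((hp1 v (Finset.ne_of_mem_erase hv)).symm)
  set F := SimpleGraph.fromEdgeSet (↑T : Set (Sym2 V)) with hF
  have claim : ∀ n : ℕ, ∀ v : V, K.dist r v = n → F.Reachable r v := by
    intro n
    induction n using Nat.strong_induction_on with
    | _ n ih =>
      intro v hv
      by_cases hvr : v = r
      · subst hvr; exact Reachable.refl _
      · have hvT : s(v, p v) ∈ T :=
          Finset.mem_image.2 ⟨v, Finset.mem_erase.2 ⟨hvr, Finset.mem_univ v⟩, rfl⟩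
        have hadj : F.Adj (p v) v := by
          rw [hF, fromEdgeSet_adj]
          exact ⟨by rwa [Sym2.eq_swap], ((hp1 v hvr)).ne⟩
        have hd := hp2 v hvr
        have hlt : K.dist r (p v) < n := by omega
        exact (ih _ hlt (p v) rfl).trans ⟨Walk.cons hadj Walk.nil⟩
  have hpre : ∀ u v : V, F.Reachable u v := fun u v =>
    ((claim _ u rfl).symm.trans (claim _ v rfl))
  set enc : Sym2 V → ℕ := fun e => ((Fintype.equivFin (Sym2 V)) e : ℕ) with henc
  have hencinj : Function.Injective enc :=
    fun a b h => (Fintype.equivFin (Sym2 V)).injective (Fin.val_injective h)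
  set c : Sym2 V → ℕ := fun e => if e ∈ T then 0 else enc e + 1 with hc
  refine ⟨c, ?_, ?_⟩
  · intro u v
    obtain ⟨w⟩ := hpre u v
    have hwe : ∀ e ∈ w.edges, e ∈ T := by
      intro e he
      have h1 := w.edges_subset_edgeSet he
      rw [hF, edgeSet_fromEdgeSet] at h1
      exact h1.1
    refine ⟨w.transfer K (fun e he => hTE e (hwe e he)), 0, ?_⟩
    intro e he
    rw [Walk.edges_transfer] at he
    simp only [hc, if_pos (hwe e he)]
  · set Ef := K.edgeSet.toFinite.toFinset with hEf
    have hTsub : T ⊆ Ef := fun e he => (Set.Finite.mem_toFinset _).2 (hTE e he)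
    have hTcard : T.card = Fintype.card V - 1 := by
      rw [hT, Finset.card_image_of_injOn, Finset.card_erase_of_mem (Finset.mem_univ r),
        Finset.card_univ]
      intro a ha b hb hab
      by_contra hne'
      simp only [Sym2.eq_iff] at hab
      rcases hab with ⟨rfl, -⟩ | ⟨h1, h2⟩
      · exact hne' rfl
      · have da := hp2 a (Finset.ne_of_mem_erase ha)
        have db := hp2 b (Finset.ne_of_mem_erase hb)
        rw [h2] at da
        rw [← h1] at db
        omega
    have himg : c '' K.edgeSet = ↑(Ef.image c) := by
      rw [Finset.coe_image, Set.Finite.coe_toFinset]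
    rw [himg, Set.ncard_coe_finset]
    have hTne : T.Nonempty := by
      rw [← Finset.card_pos, hTcard]; omega
    obtain ⟨t0, ht0⟩ := hTne
    have h0mem : (0 : ℕ) ∈ Ef.image c :=
      Finset.mem_image.2 ⟨t0, hTsub ht0, by simp [hc, ht0]⟩
    have hdiffinj : Set.InjOn c ↑(Ef \ T) := by
      intro a ha b hb hab
      rw [Finset.coe_sdiff] at ha hb
      simp only [Set.mem_diff, Finset.mem_coe] at ha hb
      rw [hc] at hab
      simp only [if_neg ha.2, if_neg hb.2] at hab
      exact hencinj (by omega)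
    have h0not : (0 : ℕ) ∉ (Ef \ T).image c := by
      simp only [Finset.mem_image]
      rintro ⟨e, he, h0⟩
      rw [Finset.mem_sdiff] at he
      rw [hc] at h0
      simp only [if_neg he.2] at h0
      omega
    have hsub2 : insert 0 ((Ef \ T).image c) ⊆ Ef.image c := by
      intro z hz
      rcases Finset.mem_insert.1 hz with rfl | hz
      · exact h0mem
      · obtain ⟨e, he, rfl⟩ := Finset.mem_image.1 hz
        exact Finset.mem_image.2 ⟨e, (Finset.mem_sdiff.1 he).1, rfl⟩
    have hcard2 : (Ef \ T).card + 1 ≤ (Ef.image c).card := by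
      calc (Ef \ T).card + 1 = (insert 0 ((Ef \ T).image c)).card := by
            rw [Finset.card_insert_of_notMem h0not, Finset.card_image_of_injOn hdiffinj]
        _ ≤ _ := Finset.card_le_card hsub2
    have hsd : (Ef \ T).card = Ef.card - T.card := Finset.card_sdiff_of_subset hTsub
    have hTle : T.card ≤ Ef.card := Finset.card_le_card hTsub
    have hm : Ef.card = K.edgeSet.ncard := (Set.ncard_eq_toFinset_card _ _).symm
    omega

private lemma mcAux_upper {α β : Type*} [Fintype α] [Fintype β]
    (G : SimpleGraph α) (H : SimpleGraph β)
    (hGc : G.Connected) {x y : β} (hxy : x ≠ y)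
    (c : Sym2 (α × β) → ℕ) (hc : (G.boxProd H).IsMCColoring c) :
    (c '' (G.boxProd H).edgeSet).ncard + Fintype.card α
      ≤ (G.boxProd H).edgeSet.ncard + 1 := by
  classical
  set K := G.boxProd H with hKdef
  obtain ⟨g0⟩ := hGc.nonempty
  set Ef := K.edgeSet.toFinite.toFinset with hEf
  set C := Ef.image c with hC
  choose w κ hκ using fun g => hc (g0, x) (g, y)
  have hwne : ∀ g : α, (g0, x) ≠ (g, y) := by
    intro g h
    exact hxy (congrArg Prod.snd h)
  have hedne : ∀ g : α, (w g).edges ≠ [] := by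
    intro g h
    apply Walk.not_nil_of_ne (hwne g) (p := w g)
    rw [Walk.nil_iff_length_eq, ← Walk.length_edges, h]
    rfl
  have hκC : ∀ g : α, κ g ∈ C := by
    intro g
    obtain ⟨e, hemem⟩ := List.exists_mem_of_ne_nil _ (hedne g)
    exact Finset.mem_image.2 ⟨e,
      (Set.Finite.mem_toFinset _).2 ((w g).edges_subset_edgeSet hemem), hκ g e hemem⟩
  set S0 := Finset.univ.erase g0 with hS0
  have keybound : ∀ j ∈ C,
      (S0.filter (fun g => κ g = j)).card + 1 ≤ (Ef.filter (fun e => c e = j)).card := by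
    intro j hj
    by_cases hemp : (S0.filter (fun g => κ g = j)).Nonempty
    · have himgcard : ((S0.filter (fun g => κ g = j)).image (fun g => (g, y))).card
          = (S0.filter (fun g => κ g = j)).card :=
        Finset.card_image_of_injOn (fun a _ b _ h => congrArg Prod.fst h)
      rw [← himgcard]
      refine mcAux_card K (Ef.filter (fun e => c e = j)) ?_ (g0, x) _ ?_ ?_ ?_ (hemp.image _)
      · intro e he
        exact (Set.Finite.mem_toFinset _).1 (Finset.mem_filter.1 he).1
      · simp only [Finset.mem_image]
        rintro ⟨g, hg, hEq⟩
        exact hxy ((congrArg Prod.snd hEq)).symm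
      · intro v hv
        obtain ⟨g, hg, rfl⟩ := Finset.mem_image.1 hv
        obtain ⟨-, hgj⟩ := Finset.mem_filter.1 hg
        exact ⟨w g, fun e he => Finset.mem_filter.2
          ⟨(Set.Finite.mem_toFinset _).2 ((w g).edges_subset_edgeSet he),
            by rw [hκ g e he, hgj]⟩⟩
      · intro v hv
        obtain ⟨g, hg, rfl⟩ := Finset.mem_image.1 hv
        have hgne : g ≠ g0 := Finset.ne_of_mem_erase (Finset.mem_filter.1 hg).1
        intro hadj
        rw [hKdef, boxProd_adj] at hadj
        rcases hadj with ⟨-, h2⟩ | ⟨-, h2⟩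
        · exact hxy h2
        · exact hgne h2.symm
    · rw [Finset.not_nonempty_iff_eq_empty.1 hemp]
      simp only [Finset.card_empty, zero_add]
      rw [Nat.succ_le_iff, Finset.card_pos]
      obtain ⟨e, heEf, hej⟩ := Finset.mem_image.1 hj
      exact ⟨e, Finset.mem_filter.2 ⟨heEf, hej⟩⟩
  have hsum1 : Ef.card = ∑ j ∈ C, (Ef.filter (fun e => c e = j)).card :=
    Finset.card_eq_sum_card_fiberwise (fun e he => Finset.mem_image.2 ⟨e, he, rfl⟩)
  have hsum2 : S0.card = ∑ j ∈ C, (S0.filter (fun g => κ g = j)).card :=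
    Finset.card_eq_sum_card_fiberwise (fun g _ => hκC g)
  have hsum3 : ∑ j ∈ C, ((S0.filter (fun g => κ g = j)).card + 1)
      ≤ ∑ j ∈ C, (Ef.filter (fun e => c e = j)).card :=
    Finset.sum_le_sum keybound
  rw [Finset.sum_add_distrib, Finset.sum_const, smul_eq_mul, mul_one] at hsum3
  have hS0card : S0.card = Fintype.card α - 1 := by
    rw [hS0, Finset.card_erase_of_mem (Finset.mem_univ _), Finset.card_univ]
  have hCcard : (c '' K.edgeSet).ncard = C.card := by
    rw [hC, ← Set.Finite.coe_toFinset K.edgeSet.toFinite, ← hEf, ← Finset.coe_image,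
      Set.ncard_coe_finset]
  have hm : Ef.card = K.edgeSet.ncard := (Set.ncard_eq_toFinset_card _ _).symm
  have halpha : 1 ≤ Fintype.card α := @Fintype.card_pos _ _ ⟨g0⟩
  omega

end MCAux

/-- Theorem 2.1(1): if neither `G` nor `H` is a tree, then
`max{|E(G)||V(H)|, |E(H)||V(G)|} + 2 ≤ mc(G □ H) ≤ |E(G)||V(H)| + (|E(H)| - 1)|V(G)| + 1`. -/
theorem mc_boxProd_of_not_tree {α β : Type*} [Fintype α] [Fintype β]
    (G : SimpleGraph α) (H : SimpleGraph β)
    (hG : G.Connected) (hH : H.Connected)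
    (hGt : ¬ G.IsTree) (hHt : ¬ H.IsTree) :
    max (G.edgeSet.ncard * Nat.card β) (H.edgeSet.ncard * Nat.card α) + 2 ≤
        (G.boxProd H).mc ∧
      (G.boxProd H).mc ≤
        G.edgeSet.ncard * Nat.card β + (H.edgeSet.ncard - 1) * Nat.card α + 1 := by
    classical
  have hKc : (G.boxProd H).Connected := hG.boxProd hH
  have hem := mcAux_boxProd_card G H
  have heG : Fintype.card α ≤ G.edgeSet.ncard := mcAux_nontree_card G hG hGt
  have heH : Fintype.card β ≤ H.edgeSet.ncard := mcAux_nontree_card H hH hHt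
  have halpha : 1 ≤ Fintype.card α := @Fintype.card_pos _ _ hG.nonempty
  have hbeta : 1 ≤ Fintype.card β := @Fintype.card_pos _ _ hH.nonempty
  obtain ⟨x, y, hxy⟩ : ∃ x y : β, x ≠ y := by
    have hHe : 0 < H.edgeSet.ncard := lt_of_lt_of_le hbeta heH
    obtain ⟨e, he⟩ := (Set.ncard_pos H.edgeSet.toFinite).1 hHe
    induction e with
    | _ a b => exact ⟨a, b, (H.mem_edgeSet.1 he).ne⟩
  have hA2 : Fintype.card α * Fintype.card β ≤ G.edgeSet.ncard * Fintype.card β :=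
    Nat.mul_le_mul_right _ heG
  have hB2 : Fintype.card α * Fintype.card β ≤ H.edgeSet.ncard * Fintype.card α := by
    rw [mul_comm (Fintype.card α)]
    exact Nat.mul_le_mul_right _ heH
  have hNα : Fintype.card α ≤ Fintype.card α * Fintype.card β :=
    Nat.le_mul_of_pos_right _ hbeta
  have hbeta2 : 2 ≤ Fintype.card β :=
    Fintype.one_lt_card_iff_nontrivial.2 ⟨⟨x, y, hxy⟩⟩
  have hcp : Fintype.card (α × β) = Fintype.card α * Fintype.card β := Fintype.card_prod α β
  have hN2 : 2 ≤ Fintype.card α * Fintype.card β :=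
    le_trans (by norm_num) (Nat.mul_le_mul halpha hbeta2)
  have hsub : (H.edgeSet.ncard - 1) * Fintype.card α
      = H.edgeSet.ncard * Fintype.card α - Fintype.card α := by
    rw [Nat.sub_mul, one_mul]
  set A := G.edgeSet.ncard * Fintype.card β with hAdef
  set B := H.edgeSet.ncard * Fintype.card α with hBdef
  set N := Fintype.card α * Fintype.card β with hNdef
  set D := (H.edgeSet.ncard - 1) * Fintype.card α with hDdef
  have hbdd : BddAbove {n | ∃ c : Sym2 (α × β) → ℕ,
      (G.boxProd H).IsMCColoring c ∧ (c '' (G.boxProd H).edgeSet).ncard = n} := by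
    refine ⟨(G.boxProd H).edgeSet.ncard, ?_⟩
    rintro n ⟨c, -, rfl⟩
    exact Set.ncard_image_le (G.boxProd H).edgeSet.toFinite
  rw [Nat.card_eq_fintype_card, Nat.card_eq_fintype_card]
  constructor
  · -- lower bound
    obtain ⟨c, hmc, hcount⟩ := mcAux_lower (G.boxProd H) hKc (by omega)
    have hmem : (c '' (G.boxProd H).edgeSet).ncard ∈ {n | ∃ c : Sym2 (α × β) → ℕ,
        (G.boxProd H).IsMCColoring c ∧ (c '' (G.boxProd H).edgeSet).ncard = n} :=
      ⟨c, hmc, rfl⟩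
    have hle : (c '' (G.boxProd H).edgeSet).ncard ≤ (G.boxProd H).mc :=
      le_csSup hbdd hmem
    refine le_trans ?_ hle
    omega
  · -- upper bound
    refine csSup_le' ?_
    rintro n ⟨c, hmc, rfl⟩
    have hub := mcAux_upper G H hG hxy c hmc
    omega
end

section
/- Let G and H be trees (with at least one edge each). Then |E(G)|·|E(H)| + 1 ≤ mc(G □ H) ≤ |E(G)|·|E(H)| + 2. -/
open SimpleGraph

open Finset

private lemma edgeFinset_congr {V : Type*} (K : SimpleGraph V) (i1 i2 : Fintype K.edgeSet) :
    @SimpleGraph.edgeFinset _ K i1 = @SimpleGraph.edgeFinset _ K i2 := by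
  congr!

private lemma degree_congr {V : Type*} (K : SimpleGraph V) (v : V)
    (i1 i2 : Fintype (K.neighborSet v)) : @SimpleGraph.degree _ K v i1 = @SimpleGraph.degree _ K v i2 := by
  congr!

private lemma walklift {V W : Type*} {P : SimpleGraph V} (S : SimpleGraph W) (f : V → W)
    (hf : ∀ a b, P.Adj a b → S.Adj (f a) (f b)) {x y : V} (p : P.Walk x y) :
    S.Reachable (f x) (f y) := by
  induction p with
  | nil => exact SimpleGraph.Reachable.refl _
  | cons h q ih => exact ((hf _ _ h).reachable).trans ih

private lemma ARITH1 {y m tcard a b p q : ℕ} (hq : q = b + 1)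
    (hm : m = q * a + p * b) (ht : tcard ≤ a + p * b) (hy : 1 + (m - tcard) ≤ y) :
    a * b + 1 ≤ y := by
  subst hq
  have e : m = a * b + a + p * b := by rw [hm]; ring
  generalize a * b = P at e ⊢
  generalize p * b = Q at *
  omega

private lemma ARITH2 {x X m n a b SA : ℕ} (ha : 1 ≤ a) (hb : 1 ≤ b)
    (hn : n = (a + 1) * (b + 1)) (hm : m = (b + 1) * a + (a + 1) * b)
    (h1 : SA + n + 2 * m = n * n) (h2 : SA ≤ (n - 1) * X) (h3 : X + x = m) :
    x ≤ a * b + 2 := by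
  by_contra hx
  push_neg at hx
  have hab : 1 ≤ a * b := by
    have := Nat.mul_le_mul ha hb
    simpa using this
  have e1 : m = 2 * (a * b) + a + b := by rw [hm]; ring
  have e2 : n = a * b + a + b + 1 := by rw [hn]; ring
  have hX : X ≤ n - 4 := by
    generalize a * b = P at e1 e2 hx hab ⊢
    omega
  have h4 : 4 ≤ n := by
    generalize a * b = P at e2 hab ⊢
    omega
  have h5 : (n - 1) * X ≤ (n - 1) * (n - 4) := Nat.mul_le_mul_left _ hX
  have h6 : (n - 1) * (n - 4) + 5 * n = n * n + 4 := by
    obtain ⟨k, rfl⟩ : ∃ k, n = k + 4 := ⟨n - 4, by omega⟩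
    have e3 : k + 4 - 1 = k + 3 := by omega
    have e4 : k + 4 - 4 = k := by omega
    rw [e3, e4]; ring
  generalize a * b = P at e1 e2 hx hab
  generalize n * n = nn at h1 h6
  generalize (n - 1) * (n - 4) = w at h5 h6
  generalize (n - 1) * X = z at h2 h5
  omega

private lemma mem_image_sym2 {γ δ : Type*} [DecidableEq δ] {f : γ → δ} {s : Finset (Sym2 γ)}
    {e : Sym2 δ} (he : e ∈ s.image (Sym2.map f)) : ∃ a b, s(a, b) ∈ s ∧ e = s(f a, f b) := by
  obtain ⟨g, hg, rfl⟩ := Finset.mem_image.mp he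
  revert hg
  refine Sym2.ind (fun a b hg => ?_) g
  exact ⟨a, b, hg, (Sym2.map_pair_eq f a b).symm⟩

private lemma mem_image_sym2' {γ δ ε : Type*} [DecidableEq γ] [DecidableEq δ] [DecidableEq ε]
    {f : ε → γ → δ} {t : Finset ε} {s : Finset (Sym2 γ)} {e : Sym2 δ}
    (he : e ∈ (t ×ˢ s).image (fun x => Sym2.map (f x.1) x.2)) :
    ∃ z a b, z ∈ t ∧ s(a, b) ∈ s ∧ e = s(f z a, f z b) := by
  obtain ⟨⟨z, g⟩, hg, rfl⟩ := Finset.mem_image.mp he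
  rw [Finset.mem_product] at hg
  obtain ⟨hz, hg⟩ := hg
  revert hg
  refine Sym2.ind (fun a b hg => ?_) g
  exact ⟨z, a, b, hz, hg, (Sym2.map_pair_eq _ a b).symm⟩

private lemma A1 {V : Type*} [Fintype V] (K : SimpleGraph V) [DecidableEq V] [DecidableRel K.Adj]
    (hK : K.Connected) : Fintype.card V ≤ K.edgeFinset.card + 1 := by
  obtain ⟨r⟩ := hK.nonempty
  have key : ∀ v, v ≠ r → ∃ x, K.Adj v x ∧ K.dist x r < K.dist v r := by
    intro v hv
    have hd : K.dist v r ≠ 0 := (hK.pos_dist_of_ne hv).ne'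
    obtain ⟨p, hp⟩ := SimpleGraph.exists_walk_of_dist_ne_zero hd
    cases p with
    | nil => simp at hd
    | @cons _ x _ h q =>
      refine ⟨x, h, ?_⟩
      have h1 : K.dist x r ≤ q.length := SimpleGraph.dist_le q
      have h2 : q.length + 1 = K.dist v r := by simpa using hp
      omega
  choose f hf using key
  let g : V → Sym2 V := fun v => if hv : v = r then s(v, v) else s(v, f v hv)
  have hcard : ({r}ᶜ : Finset V).card ≤ K.edgeFinset.card := by
    apply Finset.card_le_card_of_injOn g
    · intro v hv
      simp only [Finset.mem_coe, Finset.mem_compl, Finset.mem_singleton] at hv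
      simp only [g, dif_neg hv, Finset.mem_coe, SimpleGraph.mem_edgeFinset, SimpleGraph.mem_edgeSet]
      exact (hf v hv).1
    · intro v hv w hw hvw
      simp only [Finset.mem_coe, Finset.mem_compl, Finset.mem_singleton] at hv hw
      simp only [g, dif_neg hv, dif_neg hw] at hvw
      rcases Sym2.eq_iff.mp hvw with ⟨h1, _⟩ | ⟨h1, h2⟩
      · exact h1
      · exfalso
        have l1 := (hf v hv).2
        have l2 := (hf w hw).2
        rw [← h1] at l2
        rw [h2] at l1
        omega
  have hcc : ({r}ᶜ : Finset V).card = Fintype.card V - 1 := by simp [Finset.card_compl]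
  have : 0 < Fintype.card V := @Fintype.card_pos V _ ⟨r⟩
  omega

private lemma A2 {V : Type*} (K : SimpleGraph V) (u : V) {x v : V} (p : K.Walk x v)
    (hx : K.Reachable u x) :
    (K.induce {y | K.Reachable u y}).Reachable ⟨x, hx⟩ ⟨v, hx.trans p.reachable⟩ := by
  induction p with
  | nil => exact Reachable.refl _
  | @cons a b c h q ih =>
    have hy : K.Reachable u b := hx.trans h.reachable
    have hadj : (K.induce {y | K.Reachable u y}).Adj ⟨a, hx⟩ ⟨b, hy⟩ := by simpa using h
    exact (hadj.reachable).trans (ih hy)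

private lemma A3 {V : Type*} [Fintype V] [DecidableEq V] (K : SimpleGraph V) [DecidableRel K.Adj]
    [∀ a b : V, Decidable (K.Reachable a b)] (u : V) :
    (univ.filter (fun v => K.Reachable u v)).card ≤
      (K.edgeFinset.filter (fun f => ∀ x ∈ f, K.Reachable u x)).card + 1 := by
  classical
  set S : Set V := {y | K.Reachable u y} with hS
  have hconn : (K.induce S).Connected := by
    haveI : Nonempty ↥S := ⟨⟨u, Reachable.refl u⟩⟩
    refine Connected.mk ?_
    rintro ⟨a, ha⟩ ⟨b, hb⟩
    obtain ⟨p⟩ := ha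
    obtain ⟨q⟩ := hb
    exact ((A2 K u p (Reachable.refl u)).symm.trans (A2 K u q (Reachable.refl u)))
  have h1 : Fintype.card S ≤ (K.induce S).edgeFinset.card + 1 := A1 _ hconn
  have h2 : (univ.filter (fun v => K.Reachable u v)).card = Fintype.card S := by
    rw [Fintype.card_subtype]
    congr 1
  have h3 : (K.induce S).edgeFinset.card ≤
      (K.edgeFinset.filter (fun f => ∀ x ∈ f, K.Reachable u x)).card := by
    apply Finset.card_le_card_of_injOn (Sym2.map (Subtype.val))
    · intro f hf
      induction f using Sym2.ind with
      | _ a b =>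
        rw [Finset.mem_coe, SimpleGraph.mem_edgeFinset, SimpleGraph.mem_edgeSet] at hf
        have hadj : K.Adj ↑a ↑b := by simpa using hf
        simp only [Sym2.map_pair_eq, Finset.mem_coe, Finset.mem_filter,
          SimpleGraph.mem_edgeFinset, SimpleGraph.mem_edgeSet]
        refine ⟨hadj, ?_⟩
        intro x hx
        rcases Sym2.mem_iff.mp hx with rfl | rfl
        · exact a.2
        · exact b.2
    · exact fun f _ g _ h => Sym2.map.injective Subtype.val_injective h
  omega

/-- reachability from a vertex with no neighbors forces equality -/
private lemma A4 {V : Type*} [Fintype V] (K : SimpleGraph V) [DecidableRel K.Adj] {u v : V}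
    (h : K.Reachable u v) (hne : v ≠ u) : 0 < K.degree u := by
  obtain ⟨p⟩ := h
  cases p with
  | nil => exact absurd rfl hne
  | @cons _ x _ hadj q => exact (K.degree_pos_iff_exists_adj u).mpr ⟨x, hadj⟩

private lemma ARITH {T n e : ℕ} (he : 1 ≤ e) (h : T + 2 * e ≤ e * min n (e + 1)) :
    T ≤ (n - 1) * (e - 1) := by
  obtain ⟨b, rfl⟩ : ∃ b, e = b + 1 := ⟨e - 1, by omega⟩
  simp only [Nat.add_sub_cancel]
  rcases le_or_gt (b + 1 + 1) n with hc | hc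
  · rw [min_eq_right hc] at h
    have hexp : (b + 1) * (b + 1 + 1) = (b + 1) * b + 2 * (b + 1) := by ring
    rw [hexp] at h
    have h3 : T ≤ (b + 1) * b := by omega
    refine h3.trans (Nat.mul_le_mul_right b ?_)
    omega
  · rw [min_eq_left (by omega)] at h
    rcases n with _ | a
    · simp at h
    · simp only [Nat.add_sub_cancel]
      have hexp : (b + 1) * (a + 1) = a * b + a + b + 1 := by ring
      rw [hexp] at h
      have hba : a ≤ b := by omega
      generalize a * b = m at h ⊢
      omega

/-- CORE: the per-color-class counting bound -/
private lemma CORE {V : Type*} [Fintype V] [DecidableEq V] (K : SimpleGraph V)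
    [DecidableRel K.Adj] [∀ a b : V, Decidable (K.Reachable a b)]
    (he : 1 ≤ K.edgeFinset.card) :
    ∑ u : V, (univ.filter fun v => v ≠ u ∧ ¬ K.Adj u v ∧ K.Reachable u v).card
      ≤ (Fintype.card V - 1) * (K.edgeFinset.card - 1) := by
  classical
  set n := Fintype.card V with hn
  set e := K.edgeFinset.card with he'
  set t : V → ℕ := fun u => (univ.filter fun v => v ≠ u ∧ ¬ K.Adj u v ∧ K.Reachable u v).card
    with ht
  set C : V → Finset V := fun u => univ.filter (fun v => K.Reachable u v) with hC
  set EC : V → Finset (Sym2 V) :=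
    fun u => K.edgeFinset.filter (fun f => ∀ x ∈ f, K.Reachable u x) with hEC
  -- n positive
  obtain ⟨f₀, hf₀⟩ := Finset.card_pos.mp (lt_of_lt_of_le Nat.zero_lt_one he)
  have hnpos : 0 < n := by
    refine Fintype.card_pos_iff.mpr ?_
    induction f₀ using Sym2.ind with
    | _ a b => exact ⟨a⟩
  -- per-vertex identity on the support
  have claim1 : ∀ u : V, 0 < K.degree u → t u + (1 + K.degree u) = (C u).card := by
    intro u hu
    have hrw : (univ.filter fun v => v ≠ u ∧ ¬ K.Adj u v ∧ K.Reachable u v)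
        = C u \ insert u (K.neighborFinset u) := by
      ext v
      simp only [Finset.mem_filter, Finset.mem_univ, true_and, Finset.mem_sdiff,
        Finset.mem_insert, SimpleGraph.mem_neighborFinset, hC]
      tauto
    have hsub : insert u (K.neighborFinset u) ⊆ C u := by
      intro v hv
      simp only [Finset.mem_insert, SimpleGraph.mem_neighborFinset] at hv
      simp only [hC, Finset.mem_filter, Finset.mem_univ, true_and]
      rcases hv with rfl | hv
      · exact Reachable.refl _
      · exact hv.reachable
    have hins : (insert u (K.neighborFinset u)).card = 1 + K.degree u := by
      rw [Finset.card_insert_of_notMem (by simp), SimpleGraph.card_neighborFinset_eq_degree]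
      omega
    rw [ht]
    simp only
    rw [hrw, ← hins]
    exact Finset.card_sdiff_add_card_eq_card hsub
  have claim2 : ∀ u : V, K.degree u = 0 → t u = 0 := by
    intro u hu
    rw [ht]
    simp only
    rw [Finset.card_eq_zero]
    ext v
    simp only [Finset.mem_filter, Finset.mem_univ, true_and, Finset.notMem_empty, iff_false,
      not_and]
    intro hvu _ hreach
    exact absurd hu (by have := A4 K hreach hvu; omega)
  have claim3 : ∀ u : V, (C u).card ≤ (EC u).card + 1 := fun u => A3 K u
  -- the support
  set SS : Finset V := univ.filter (fun u => 0 < K.degree u) with hSS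
  have hsum1 : ∑ u : V, t u = ∑ u ∈ SS, t u := by
    refine (Finset.sum_subset (Finset.subset_univ SS) ?_).symm
    intro u _ hu
    simp only [hSS, Finset.mem_filter, Finset.mem_univ, true_and] at hu
    exact claim2 u (by omega)
  have hdegsum : ∑ u ∈ SS, K.degree u = 2 * e := by
    rw [he', ← SimpleGraph.sum_degrees_eq_twice_card_edges]
    refine Finset.sum_subset (Finset.subset_univ SS) ?_
    intro u _ hu
    simp only [hSS, Finset.mem_filter, Finset.mem_univ, true_and] at hu
    omega
  -- main accumulation
  have hmain : ∑ u : V, t u + 2 * e ≤ ∑ u ∈ SS, (EC u).card := by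
    have h1 : ∑ u ∈ SS, (t u + (1 + K.degree u)) = ∑ u ∈ SS, (C u).card := by
      apply Finset.sum_congr rfl
      intro u hu
      simp only [hSS, Finset.mem_filter] at hu
      exact claim1 u hu.2
    have h2 : ∑ u ∈ SS, (C u).card ≤ ∑ u ∈ SS, ((EC u).card + 1) :=
      Finset.sum_le_sum (fun u _ => claim3 u)
    rw [Finset.sum_add_distrib] at h1 h2
    rw [Finset.sum_add_distrib] at h1
    simp only [Finset.sum_const, smul_eq_mul, mul_one] at h1 h2
    rw [hsum1, ← hdegsum]
    omega
  -- swap the double count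
  have hswap : ∑ u ∈ SS, (EC u).card ≤
      ∑ f ∈ K.edgeFinset, (univ.filter fun u => ∀ x ∈ f, K.Reachable u x).card := by
    calc ∑ u ∈ SS, (EC u).card ≤ ∑ u : V, (EC u).card :=
          Finset.sum_le_sum_of_subset (Finset.filter_subset _ _)
      _ = ∑ u : V, ∑ f ∈ K.edgeFinset, (if (∀ x ∈ f, K.Reachable u x) then 1 else 0) := by
          apply Finset.sum_congr rfl
          intro u _
          rw [hEC]
          exact Finset.card_filter _ _
      _ = ∑ f ∈ K.edgeFinset, ∑ u : V, (if (∀ x ∈ f, K.Reachable u x) then 1 else 0) :=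
          Finset.sum_comm
      _ = ∑ f ∈ K.edgeFinset, (univ.filter fun u => ∀ x ∈ f, K.Reachable u x).card := by
          apply Finset.sum_congr rfl
          intro f _
          rw [Finset.card_filter]
  -- per-edge bound
  have hperedge : ∀ f ∈ K.edgeFinset,
      (univ.filter fun u => ∀ x ∈ f, K.Reachable u x).card ≤ min n (e + 1) := by
    intro f hf
    induction f using Sym2.ind with
    | _ a b =>
      have hsub : (univ.filter fun u => ∀ x ∈ s(a, b), K.Reachable u x) ⊆ C a := by
        intro u hu
        simp only [Finset.mem_filter, Finset.mem_univ, true_and] at hu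
        simp only [hC, Finset.mem_filter, Finset.mem_univ, true_and]
        exact (hu a (Sym2.mem_mk_left a b)).symm
      have h1 : (C a).card ≤ n := by
        rw [hn]
        exact Finset.card_le_univ _
      have h2 : (C a).card ≤ e + 1 := by
        have := claim3 a
        have : (EC a).card ≤ e := by
          rw [hEC, he']
          exact Finset.card_le_card (Finset.filter_subset _ _)
        omega
      have := Finset.card_le_card hsub
      omega
  have htotal : ∑ u : V, t u + 2 * e ≤ e * min n (e + 1) := by
    calc ∑ u : V, t u + 2 * e ≤ ∑ f ∈ K.edgeFinset, (univ.filter fun u => ∀ x ∈ f, K.Reachable u x).card := le_trans hmain hswap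
      _ ≤ ∑ _f ∈ K.edgeFinset, min n (e + 1) := Finset.sum_le_sum hperedge
      _ = e * min n (e + 1) := by rw [Finset.sum_const, smul_eq_mul, he']
  -- final arithmetic
  exact ARITH he htotal


/-- Theorem 2.1(3): if both `G` and `H` are trees (with at least one edge each), then
`|E(G)||E(H)| + 1 ≤ mc(G □ H) ≤ |E(G)||E(H)| + 2`. -/
theorem mc_boxProd_of_tree_of_tree {α β : Type*} [Fintype α] [Fintype β]
    (G : SimpleGraph α) (H : SimpleGraph β)
    (hGt : G.IsTree) (hHt : H.IsTree)
    (hGe : G.edgeSet.Nonempty) (hHe : H.edgeSet.Nonempty) :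
    G.edgeSet.ncard * H.edgeSet.ncard + 1 ≤ (G.boxProd H).mc ∧
      (G.boxProd H).mc ≤ G.edgeSet.ncard * H.edgeSet.ncard + 2 := by
  classical
  set F := G.boxProd H with hF
  have hGca : G.edgeSet.ncard = G.edgeFinset.card := by
    rw [← coe_edgeFinset, Set.ncard_coe_finset]
  have hHca : H.edgeSet.ncard = H.edgeFinset.card := by
    rw [← coe_edgeFinset, Set.ncard_coe_finset]
  have hp : G.edgeFinset.card + 1 = Fintype.card α := hGt.card_edgeFinset
  have hq : H.edgeFinset.card + 1 = Fintype.card β := hHt.card_edgeFinset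
  have heG1 : 1 ≤ G.edgeFinset.card := by
    obtain ⟨e, he⟩ := hGe
    exact Finset.card_pos.mpr ⟨e, mem_edgeFinset.mpr he⟩
  have heH1 : 1 ≤ H.edgeFinset.card := by
    obtain ⟨e, he⟩ := hHe
    exact Finset.card_pos.mpr ⟨e, mem_edgeFinset.mpr he⟩
  have hn : Fintype.card (α × β) = Fintype.card α * Fintype.card β := Fintype.card_prod α β
  -- edge count of the box product
  have hmF : F.edgeFinset.card =
      Fintype.card β * G.edgeFinset.card + Fintype.card α * H.edgeFinset.card := by
    have hds : ∑ x : α × β, F.degree x = 2 * F.edgeFinset.card := by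
      rw [← F.sum_degrees_eq_twice_card_edges]
      exact Finset.sum_congr rfl fun x _ => degree_congr F x _ _
    have hdeg : ∀ x : α × β, F.degree x = G.degree x.1 + H.degree x.2 := by
      intro x
      rw [degree_congr F x _ (SimpleGraph.boxProdFintypeNeighborSet x)]
      exact SimpleGraph.degree_boxProd (G := G) (H := H) x
    have hsplit : ∑ x : α × β, F.degree x =
        2 * (Fintype.card β * G.edgeFinset.card + Fintype.card α * H.edgeFinset.card) := by
      calc ∑ x : α × β, F.degree x = ∑ x : α × β, (G.degree x.1 + H.degree x.2) :=
            Finset.sum_congr rfl fun x _ => hdeg x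
        _ = 2 * (Fintype.card β * G.edgeFinset.card + Fintype.card α * H.edgeFinset.card) := by
            rw [Fintype.sum_prod_type]
            simp only [degree_congr G _ _ (G.neighborSetFintype _), degree_congr H _ _ (H.neighborSetFintype _)]
            simp only [Finset.sum_add_distrib, Finset.sum_const, Finset.card_univ, smul_eq_mul]
            simp only [← Finset.mul_sum]
            rw [G.sum_degrees_eq_twice_card_edges, H.sum_degrees_eq_twice_card_edges]
            ring
    omega
  -- ===== lower bound construction =====
  have hβ : Nonempty β := hHt.isConnected.nonempty
  obtain ⟨b₀⟩ := hβ
  set TF : Finset (Sym2 (α × β)) :=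
    G.edgeFinset.image (Sym2.map (fun a => (a, b₀))) ∪
      ((univ : Finset α) ×ˢ H.edgeFinset).image
        (fun x => Sym2.map (fun b => (x.1, b)) x.2) with hTF
  set T : SimpleGraph (α × β) := fromEdgeSet ↑TF with hT
  have hTle : T ≤ F := by
    intro v w hvw
    rw [hT, fromEdgeSet_adj] at hvw
    obtain ⟨hm', hne⟩ := hvw
    rw [Finset.mem_coe, hTF, Finset.mem_union] at hm'
    rcases hm' with h1 | h2
    · obtain ⟨a, a', hmem, heq⟩ := mem_image_sym2 h1
      have hadj : G.Adj a a' := mem_edgeFinset.mp hmem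
      rcases Sym2.eq_iff.mp heq.symm with ⟨hv, hw⟩ | ⟨hv, hw⟩ <;>
        · rw [← hv, ← hw]
          rw [hF]
          first
            | exact SimpleGraph.boxProd_adj.mpr (Or.inl ⟨hadj, rfl⟩)
            | exact SimpleGraph.boxProd_adj.mpr (Or.inl ⟨hadj.symm, rfl⟩)
    · obtain ⟨a, b, b', hmem, hmem', heq⟩ := mem_image_sym2' h2
      have hadj : H.Adj b b' := mem_edgeFinset.mp hmem'
      rcases Sym2.eq_iff.mp heq.symm with ⟨hv, hw⟩ | ⟨hv, hw⟩ <;>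
        · rw [← hv, ← hw]
          rw [hF]
          first
            | exact SimpleGraph.boxProd_adj.mpr (Or.inr ⟨hadj, rfl⟩)
            | exact SimpleGraph.boxProd_adj.mpr (Or.inr ⟨hadj.symm, rfl⟩)
  have hTreach : ∀ u v : α × β, T.Reachable u v := by
    have hfib : ∀ (a : α) (b b' : β), T.Reachable (a, b) (a, b') := by
      intro a b b'
      obtain ⟨pw⟩ := hHt.isConnected b b'
      refine walklift T (fun x => (a, x)) ?_ pw
      intro c d hcd
      rw [hT, fromEdgeSet_adj]
      refine ⟨?_, ?_⟩
      · rw [Finset.mem_coe, hTF, Finset.mem_union]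
        right
        refine Finset.mem_image.mpr ⟨(a, s(c, d)), ?_, ?_⟩
        · exact Finset.mem_product.mpr ⟨Finset.mem_univ _, mem_edgeFinset.mpr hcd⟩
        · exact Sym2.map_pair_eq _ c d
      · simp only [ne_eq, Prod.mk.injEq, not_and]
        intro _
        exact hcd.ne
    have hbase : ∀ (a a' : α), T.Reachable (a, b₀) (a', b₀) := by
      intro a a'
      obtain ⟨pw⟩ := hGt.isConnected a a'
      refine walklift T (fun x => (x, b₀)) ?_ pw
      intro c d hcd
      rw [hT, fromEdgeSet_adj]
      refine ⟨?_, ?_⟩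
      · rw [Finset.mem_coe, hTF, Finset.mem_union]
        left
        exact Finset.mem_image.mpr ⟨s(c, d), mem_edgeFinset.mpr hcd, Sym2.map_pair_eq _ c d⟩
      · simp only [ne_eq, Prod.mk.injEq, and_true]
        exact hcd.ne
    rintro ⟨a, b⟩ ⟨a', b'⟩
    exact ((hfib a b b₀).trans (hbase a a')).trans (hfib a' b₀ b')
  have hTcard : T.edgeFinset.card ≤
      G.edgeFinset.card + Fintype.card α * H.edgeFinset.card := by
    have hsub : T.edgeFinset ⊆ TF := by
      intro e he
      rw [mem_edgeFinset, hT, edgeSet_fromEdgeSet] at he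
      exact Finset.mem_coe.mp he.1
    calc T.edgeFinset.card ≤ TF.card := Finset.card_le_card hsub
      _ ≤ (G.edgeFinset.image (Sym2.map (fun a => (a, b₀)))).card +
            (((univ : Finset α) ×ˢ H.edgeFinset).image
              (fun x => Sym2.map (fun b => (x.1, b)) x.2)).card := by
          rw [hTF]; exact Finset.card_union_le _ _
      _ ≤ G.edgeFinset.card + Fintype.card α * H.edgeFinset.card := by
          have h1 := Finset.card_image_le (s := G.edgeFinset)
            (f := Sym2.map (fun a => (a, b₀)))
          have h2 := Finset.card_image_le (s := (univ : Finset α) ×ˢ H.edgeFinset)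
            (f := fun x => Sym2.map (fun b => (x.1, b)) x.2)
          rw [Finset.card_product, Finset.card_univ] at h2
          omega
  -- the coloring
  set enc : Sym2 (α × β) → ℕ := fun e => ((Fintype.equivFin (Sym2 (α × β))) e : ℕ) with henc
  set c₀ : Sym2 (α × β) → ℕ := fun e => if e ∈ T.edgeSet then 0 else enc e + 1 with hc₀
  have hmc₀ : F.IsMCColoring c₀ := by
    intro u v
    obtain ⟨w⟩ := hTreach u v
    have hsubE : ∀ e ∈ w.edges, e ∈ F.edgeSet := fun e he =>
      (SimpleGraph.edgeSet_mono hTle) (w.edges_subset_edgeSet he)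
    refine ⟨w.transfer F hsubE, 0, ?_⟩
    intro e he
    rw [SimpleGraph.Walk.edges_transfer] at he
    have heT : e ∈ T.edgeSet := w.edges_subset_edgeSet he
    simp only [hc₀, if_pos heT]
  have himagecalc : (c₀ '' F.edgeSet).ncard = (F.edgeFinset.image c₀).card := by
    rw [← coe_edgeFinset, ← Finset.coe_image, Set.ncard_coe_finset]
  have hgcount : G.edgeFinset.card * H.edgeFinset.card + 1 ≤ (F.edgeFinset.image c₀).card := by
    obtain ⟨a, a', hadj⟩ : ∃ a a', G.Adj a a' := by
      obtain ⟨e, he⟩ := hGe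
      revert he
      refine Sym2.ind (fun a a' he => ⟨a, a', he⟩) e
    have he₀T : s((a, b₀), (a', b₀)) ∈ T.edgeSet := by
      rw [hT, edgeSet_fromEdgeSet]
      refine ⟨?_, ?_⟩
      · rw [Finset.mem_coe, hTF, Finset.mem_union]
        left
        exact Finset.mem_image.mpr ⟨s(a, a'), mem_edgeFinset.mpr hadj, Sym2.map_pair_eq _ a a'⟩
      · simp only [Set.mem_setOf_eq, Sym2.mem_diagSet, Sym2.mk_isDiag_iff, Prod.mk.injEq, and_true]
        exact hadj.ne
    have he₀F : s((a, b₀), (a', b₀)) ∈ F.edgeFinset := by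
      rw [mem_edgeFinset, mem_edgeSet, hF]
      exact SimpleGraph.boxProd_adj.mpr (Or.inl ⟨hadj, rfl⟩)
    have h0mem : (0 : ℕ) ∈ F.edgeFinset.image c₀ :=
      Finset.mem_image.mpr ⟨_, he₀F, by simp only [hc₀, if_pos he₀T]⟩
    set D := F.edgeFinset \ T.edgeFinset with hD
    have hnotT : ∀ e ∈ D, e ∉ T.edgeSet := by
      intro e he hc
      exact (Finset.mem_sdiff.mp he).2 (mem_edgeFinset.mpr hc)
    have hinj : Set.InjOn c₀ ↑D := by
      intro e he e' he' hee
      simp only [hc₀, if_neg (hnotT e he), if_neg (hnotT e' he')] at hee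
      have : enc e = enc e' := by omega
      rw [henc] at this
      exact (Fintype.equivFin (Sym2 (α × β))).injective (Fin.val_injective this)
    have h0not : (0 : ℕ) ∉ D.image c₀ := by
      intro hcon
      obtain ⟨e, he, hee⟩ := Finset.mem_image.mp hcon
      simp only [hc₀, if_neg (hnotT e he)] at hee
      omega
    have hcard1 : 1 + D.card ≤ (F.edgeFinset.image c₀).card := by
      have hsub : insert 0 (D.image c₀) ⊆ F.edgeFinset.image c₀ := by
        refine Finset.insert_subset h0mem ?_
        exact Finset.image_subset_image (Finset.sdiff_subset)
      have : (insert 0 (D.image c₀)).card = 1 + D.card := by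
        rw [Finset.card_insert_of_notMem h0not, Finset.card_image_of_injOn hinj]
        omega
      rw [← this]
      exact Finset.card_le_card hsub
    have hDge : F.edgeFinset.card ≤ D.card + T.edgeFinset.card := by
      have h1 : (F.edgeFinset \ T.edgeFinset).card + T.edgeFinset.card
          = (F.edgeFinset ∪ T.edgeFinset).card := Finset.card_sdiff_add_card F.edgeFinset _
      have h2 : F.edgeFinset ⊆ F.edgeFinset ∪ T.edgeFinset := Finset.subset_union_left
      have := Finset.card_le_card h2
      rw [hD]
      omega
    refine ARITH1 (b := H.edgeFinset.card) (p := Fintype.card α)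
      (m := F.edgeFinset.card) (tcard := T.edgeFinset.card) hq.symm ?_ hTcard ?_
    · rw [hmF]
    · omega
  -- ===== assembling via sSup =====
  have hmem : (F.edgeFinset.image c₀).card ∈
      {n | ∃ c : Sym2 (α × β) → ℕ, F.IsMCColoring c ∧ (c '' F.edgeSet).ncard = n} :=
    ⟨c₀, hmc₀, himagecalc⟩
  have hbdd : BddAbove {n | ∃ c : Sym2 (α × β) → ℕ,
      F.IsMCColoring c ∧ (c '' F.edgeSet).ncard = n} := by
    refine ⟨F.edgeFinset.card, ?_⟩
    rintro x ⟨c, _, rfl⟩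
    have h1 : (c '' F.edgeSet).ncard ≤ F.edgeSet.ncard := Set.ncard_image_le (Set.toFinite _)
    have h2 : F.edgeSet.ncard = F.edgeFinset.card := by
      rw [← coe_edgeFinset, Set.ncard_coe_finset]
    omega
  constructor
  · rw [hGca, hHca]
    exact le_trans hgcount (le_csSup hbdd hmem)
  · -- ===== upper bound =====
    rw [hGca, hHca]
    apply csSup_le ⟨_, hmem⟩
    rintro x ⟨c, hc, rfl⟩
    rw [show (c '' F.edgeSet).ncard = (F.edgeFinset.image c).card from by
      rw [← coe_edgeFinset, ← Finset.coe_image, Set.ncard_coe_finset]]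
    set KF := F.edgeFinset.image c with hKF
    set Ek : ℕ → Finset (Sym2 (α × β)) := fun k => F.edgeFinset.filter (fun e => c e = k)
      with hEk
    set Kk : ℕ → SimpleGraph (α × β) := fun k => fromEdgeSet ↑(Ek k) with hKk
    have hKkset : ∀ k, (Kk k).edgeSet = ↑(Ek k) := by
      intro k
      rw [hKk]
      simp only
      rw [edgeSet_fromEdgeSet]
      apply Disjoint.sdiff_eq_left
      rw [Set.disjoint_left]
      intro e he hdiag
      rw [Finset.mem_coe, hEk] at he
      simp only [Finset.mem_filter] at he
      exact (SimpleGraph.not_isDiag_of_mem_edgeSet F (mem_edgeFinset.mp he.1)) hdiag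
    have hKkedge : ∀ k, (Kk k).edgeFinset = Ek k := by
      intro k
      apply Finset.coe_injective
      rw [coe_edgeFinset]
      exact hKkset k
    have hKkle : ∀ k u v, (Kk k).Adj u v → F.Adj u v := by
      intro k u v h
      have h1 : s(u, v) ∈ (Kk k).edgeSet := h
      rw [hKkset k, Finset.mem_coe, hEk] at h1
      simp only [Finset.mem_filter, mem_edgeFinset, mem_edgeSet] at h1
      exact h1.1
    have hek1 : ∀ k ∈ KF, 1 ≤ (Ek k).card := by
      intro k hk
      obtain ⟨e, he, hce⟩ := Finset.mem_image.mp hk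
      exact Finset.card_pos.mpr ⟨e, Finset.mem_filter.mpr ⟨he, hce⟩⟩
    have hcov : ∀ u v : α × β, v ≠ u → ¬ F.Adj u v → ∃ k ∈ KF, (Kk k).Reachable u v := by
      intro u v hne hnadj
      obtain ⟨w, k, hwk⟩ := hc u v
      cases w with
      | nil => exact absurd rfl hne
      | @cons _ z _ hadj qq =>
        have hfe : (Walk.cons hadj qq).edges = s(u, z) :: qq.edges := Walk.edges_cons hadj qq
        have hfemem : s(u, z) ∈ (Walk.cons hadj qq).edges := by
          rw [hfe]; exact List.mem_cons_self
        have hkmem : k ∈ KF := by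
          rw [hKF]
          refine Finset.mem_image.mpr ⟨s(u, z), ?_, hwk _ hfemem⟩
          exact mem_edgeFinset.mpr ((Walk.cons hadj qq).edges_subset_edgeSet hfemem)
        refine ⟨k, hkmem, ?_⟩
        have htr : ∀ e ∈ (Walk.cons hadj qq).edges, e ∈ (Kk k).edgeSet := by
          intro e he
          rw [hKkset k, Finset.mem_coe, hEk]
          simp only [Finset.mem_filter]
          exact ⟨mem_edgeFinset.mpr ((Walk.cons hadj qq).edges_subset_edgeSet he), hwk e he⟩
        exact ((Walk.cons hadj qq).transfer (Kk k) htr).reachable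
    -- per-vertex counting
    have hAu : ∀ u : α × β,
        (univ.filter fun v => v ≠ u ∧ ¬ F.Adj u v).card + (1 + F.degree u)
          = Fintype.card (α × β) := by
      intro u
      have hrw : (univ.filter fun v => v ≠ u ∧ ¬ F.Adj u v)
          = univ \ insert u (F.neighborFinset u) := by
        ext v
        simp only [Finset.mem_filter, Finset.mem_univ, true_and, Finset.mem_sdiff,
          Finset.mem_insert, SimpleGraph.mem_neighborFinset]
        tauto
      have hins : (insert u (F.neighborFinset u)).card = 1 + F.degree u := by
        rw [Finset.card_insert_of_notMem (by simp), F.card_neighborFinset_eq_degree]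
        omega
      rw [hrw, ← hins, ← Finset.card_univ]
      exact Finset.card_sdiff_add_card_eq_card (Finset.subset_univ _)
    have hSA1 : ∑ u : α × β, (univ.filter fun v => v ≠ u ∧ ¬ F.Adj u v).card
        + Fintype.card (α × β) + 2 * F.edgeFinset.card
        = Fintype.card (α × β) * Fintype.card (α × β) := by
      have hh : ∑ u : α × β, ((univ.filter fun v => v ≠ u ∧ ¬ F.Adj u v).card
          + (1 + F.degree u)) = ∑ _u : α × β, Fintype.card (α × β) :=
        Finset.sum_congr rfl fun u _ => by rw [hAu u]
      rw [Finset.sum_add_distrib, Finset.sum_add_distrib, Finset.sum_const,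
        Finset.sum_const, Finset.card_univ, smul_eq_mul, mul_one, smul_eq_mul] at hh
      have hdsF : ∑ u : α × β, F.degree u = 2 * F.edgeFinset.card := by
        rw [← F.sum_degrees_eq_twice_card_edges]
        exact Finset.sum_congr rfl fun x _ => degree_congr F x _ _
      omega
    have hcover_le : ∀ u : α × β, (univ.filter fun v => v ≠ u ∧ ¬ F.Adj u v).card ≤
        ∑ k ∈ KF, (univ.filter fun v =>
          v ≠ u ∧ ¬ (Kk k).Adj u v ∧ (Kk k).Reachable u v).card := by
      intro u
      calc (univ.filter fun v => v ≠ u ∧ ¬ F.Adj u v).card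
          ≤ (KF.biUnion fun k => univ.filter fun v =>
              v ≠ u ∧ ¬ (Kk k).Adj u v ∧ (Kk k).Reachable u v).card := by
            apply Finset.card_le_card
            intro v hv
            simp only [Finset.mem_filter, Finset.mem_univ, true_and] at hv
            obtain ⟨k, hk, hr⟩ := hcov u v hv.1 hv.2
            refine Finset.mem_biUnion.mpr ⟨k, hk, ?_⟩
            simp only [Finset.mem_filter, Finset.mem_univ, true_and]
            exact ⟨hv.1, fun hadj => hv.2 (hKkle k u v hadj), hr⟩
        _ ≤ _ := Finset.card_biUnion_le
    have hCORE : ∀ k ∈ KF, ∑ u : α × β, (univ.filter fun v =>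
        v ≠ u ∧ ¬ (Kk k).Adj u v ∧ (Kk k).Reachable u v).card
          ≤ (Fintype.card (α × β) - 1) * ((Ek k).card - 1) := by
      intro k hk
      have hEq : (@SimpleGraph.edgeFinset _ (Kk k) ((Kk k).fintypeEdgeSet)) = Ek k :=
        (edgeFinset_congr _ _ _).trans (hKkedge k)
      have h1 : 1 ≤ (@SimpleGraph.edgeFinset _ (Kk k) ((Kk k).fintypeEdgeSet)).card := by
        rw [hEq]; exact hek1 k hk
      have h2 := CORE (Kk k) h1
      rwa [hEq] at h2
    have htotal : ∑ u : α × β, (univ.filter fun v => v ≠ u ∧ ¬ F.Adj u v).card ≤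
        (Fintype.card (α × β) - 1) * ∑ k ∈ KF, ((Ek k).card - 1) := by
      calc ∑ u : α × β, (univ.filter fun v => v ≠ u ∧ ¬ F.Adj u v).card
          ≤ ∑ u : α × β, ∑ k ∈ KF, (univ.filter fun v =>
              v ≠ u ∧ ¬ (Kk k).Adj u v ∧ (Kk k).Reachable u v).card :=
            Finset.sum_le_sum fun u _ => hcover_le u
        _ = ∑ k ∈ KF, ∑ u : α × β, (univ.filter fun v =>
              v ≠ u ∧ ¬ (Kk k).Adj u v ∧ (Kk k).Reachable u v).card := Finset.sum_comm
        _ ≤ ∑ k ∈ KF, (Fintype.card (α × β) - 1) * ((Ek k).card - 1) :=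
            Finset.sum_le_sum hCORE
        _ = (Fintype.card (α × β) - 1) * ∑ k ∈ KF, ((Ek k).card - 1) := by
            rw [Finset.mul_sum]
    have hpart : ∑ k ∈ KF, (Ek k).card = F.edgeFinset.card :=
      (Finset.card_eq_sum_card_fiberwise fun e he => Finset.mem_image_of_mem c he).symm
    have hXx : ∑ k ∈ KF, ((Ek k).card - 1) + KF.card = F.edgeFinset.card := by
      rw [← hpart]
      calc ∑ k ∈ KF, ((Ek k).card - 1) + KF.card
          = ∑ k ∈ KF, (((Ek k).card - 1) + 1) := by
            rw [Finset.sum_add_distrib, Finset.sum_const, smul_eq_mul, mul_one]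
        _ = ∑ k ∈ KF, (Ek k).card :=
            Finset.sum_congr rfl fun k hk => Nat.sub_add_cancel (hek1 k hk)
    exact ARITH2 heG1 heH1 (by rw [hn, ← hp, ← hq]) (by rw [hmF, ← hp, ← hq])
      hSA1 htotal hXx
end

section
/- Let G and H be connected graphs, at least one of which is not complete, and suppose neither G nor H is a tree. Then mc(G ⊠ H) ≥ max{|E(G)|·|V(H)| + 2·|E(G)|·|E(H)| + 2, |E(H)|·|V(G)| + 2·|E(G)|·|E(H)| + 2} and mc(G ⊠ H) ≤ |E(G)|·|V(H)| + |E(H)|·|V(G)| + 2·|E(G)|·|E(H)| − min{|V(G)|, |V(H)|} + 1. -/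
open SimpleGraph

section AuxMC
open Finset

variable {V : Type*}


lemma aux_connected_sdiff {G : SimpleGraph V} (hconn : G.Connected) {v w : V}
    (hadj : G.Adj v w) (hnb : ¬ G.IsBridge s(v, w)) :
    (G \ fromEdgeSet {s(v, w)}).Connected := by
  rw [isBridge_iff] at hnb
  push_neg at hnb
  have hreach : (G \ fromEdgeSet {s(v, w)}).Reachable v w := hnb
  have key : ∀ a b : V, G.Adj a b → (G \ fromEdgeSet {s(v, w)}).Reachable a b := by
    intro a b hab
    by_cases he : s(a, b) = s(v, w)
    · rw [Sym2.eq_iff] at he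
      rcases he with ⟨rfl, rfl⟩ | ⟨rfl, rfl⟩
      · exact hreach
      · exact hreach.symm
    · exact Adj.reachable ⟨hab, by simp [fromEdgeSet_adj, he]⟩
  haveI := hconn.nonempty
  refine ⟨fun a b => ?_⟩
  obtain ⟨p⟩ := hconn.preconnected a b
  induction p with
  | nil => exact Reachable.refl _
  | cons h p ih => exact (key _ _ h).trans ih

lemma aux_exists_tree [Fintype V] :
    ∀ (n : ℕ) (G : SimpleGraph V), G.edgeSet.ncard ≤ n → G.Connected →
      ∃ T : SimpleGraph V, T ≤ G ∧ T.IsTree := by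
  intro n
  induction n with
  | zero =>
    intro G hcard hconn
    refine ⟨G, le_refl _, hconn, ?_⟩
    have : G.edgeSet = ∅ := by
      rw [← Set.ncard_eq_zero G.edgeSet.toFinite]
      omega
    rw [edgeSet_eq_empty] at this
    rw [this]
    exact isAcyclic_bot
  | succ n ih =>
    intro G hcard hconn
    by_cases hac : G.IsAcyclic
    · exact ⟨G, le_refl _, hconn, hac⟩
    · rw [isAcyclic_iff_forall_adj_isBridge] at hac
      push_neg at hac
      obtain ⟨v, w, hadj, hnb⟩ := hac
      have hconn' := aux_connected_sdiff hconn hadj hnb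
      have hE : (G \ fromEdgeSet {s(v, w)}).edgeSet = G.edgeSet \ {s(v, w)} := by
        rw [edgeSet_sdiff, edgeSet_fromEdgeSet, edgeSet_sdiff_sdiff_isDiag]
      have hcard' : (G \ fromEdgeSet {s(v, w)}).edgeSet.ncard ≤ n := by
        rw [hE]
        have h1 : s(v, w) ∈ G.edgeSet := hadj
        have := Set.ncard_diff_singleton_of_mem h1
        omega
      obtain ⟨T, hT, hTt⟩ := ih _ hcard' hconn'
      exact ⟨T, hT.trans sdiff_le, hTt⟩


lemma aux_tree_ncard [Fintype V] {T : SimpleGraph V} (hT : T.IsTree) :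
    T.edgeSet.ncard + 1 = Fintype.card V := by
  classical
  have := hT.card_edgeFinset
  rwa [Set.ncard_eq_toFinset_card'] 

lemma aux_card_le_of_connected [Fintype V] {G : SimpleGraph V} (h : G.Connected) :
    Fintype.card V ≤ G.edgeSet.ncard + 1 := by
  obtain ⟨T, hle, hT⟩ := aux_exists_tree G.edgeSet.ncard G (le_refl _) h
  have h1 : T.edgeSet ⊆ G.edgeSet := edgeSet_mono hle
  have h2 := Set.ncard_le_ncard h1 G.edgeSet.toFinite
  have := aux_tree_ncard hT
  omega

lemma aux_card_le_of_not_tree [Fintype V] {G : SimpleGraph V} (h : G.Connected)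
    (ht : ¬ G.IsTree) : Fintype.card V ≤ G.edgeSet.ncard := by
  obtain ⟨T, hle, hT⟩ := aux_exists_tree G.edgeSet.ncard G (le_refl _) h
  have h1 : T.edgeSet ⊆ G.edgeSet := edgeSet_mono hle
  have hne : T.edgeSet ≠ G.edgeSet := by
    intro hEq
    exact ht (edgeSet_inj.mp hEq ▸ hT)
  have h2 : T.edgeSet.ncard < G.edgeSet.ncard :=
    Set.ncard_lt_ncard (ssubset_of_subset_of_ne h1 hne) G.edgeSet.toFinite
  have := aux_tree_ncard hT
  omega


lemma aux_mc_lower [Fintype V] (G : SimpleGraph V) (hconn : G.Connected)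
    (hV : 2 ≤ Fintype.card V) :
    G.edgeSet.ncard + 2 ≤ G.mc + Fintype.card V := by
  classical
  obtain ⟨T, hle, hT⟩ := aux_exists_tree G.edgeSet.ncard G (le_refl _) hconn
  obtain ⟨f, hf⟩ := exists_injective_nat (Sym2 V)
  set c : Sym2 V → ℕ := fun e => if e ∈ T.edgeSet then 0 else f e + 1 with hc
  have hsub : T.edgeSet ⊆ G.edgeSet := edgeSet_mono hle
  have htn := aux_tree_ncard hT
  -- tree has an edge
  have hT0 : T.edgeSet.Nonempty := by
    rw [← Set.ncard_pos T.edgeSet.toFinite]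
    omega
  obtain ⟨e0, he0⟩ := hT0
  -- MC coloring
  have hMC : G.IsMCColoring c := by
    intro u v
    obtain ⟨p⟩ := hT.isConnected.preconnected u v
    refine ⟨p.mapLe hle, 0, ?_⟩
    intro e he
    have : e ∈ T.edgeSet := by
      unfold Walk.mapLe at he
      rw [Walk.edges_map] at he
      simp only [List.mem_map] at he
      obtain ⟨e', he', rfl⟩ := he
      have : Sym2.map (Hom.ofLE hle) e' = e' := by
        have : (Hom.ofLE hle : V → V) = id := rfl
        rw [this, Sym2.map_id, id_eq]
      rw [this]
      exact p.edges_subset_edgeSet he'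
    simp [hc, this]
  -- color count
  have himg : c '' G.edgeSet = insert 0 ((fun e => f e + 1) '' (G.edgeSet \ T.edgeSet)) := by
    apply Set.Subset.antisymm
    · rintro x ⟨e, he, rfl⟩
      by_cases h : e ∈ T.edgeSet
      · simp [hc, h]
      · exact Set.mem_insert_of_mem _ ⟨e, ⟨he, h⟩, by simp [hc, h]⟩
    · rintro x (rfl | ⟨e, ⟨he, hne⟩, rfl⟩)
      · exact ⟨e0, hsub he0, by simp [hc, he0]⟩
      · exact ⟨e, he, by simp [hc, hne]⟩
  have hfin : (G.edgeSet \ T.edgeSet).Finite := G.edgeSet.toFinite.diff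
  have hcount : (c '' G.edgeSet).ncard = 1 + (G.edgeSet.ncard - T.edgeSet.ncard) := by
    rw [himg, Set.ncard_insert_of_notMem (by rintro ⟨e, -, h⟩; simp at h) (hfin.image _),
      Set.ncard_image_of_injective _ (fun a b h => hf (by simpa using h)),
      Set.ncard_diff hsub]
    omega
  -- mc bound
  have hmem : (1 + (G.edgeSet.ncard - T.edgeSet.ncard)) ∈
      {n | ∃ c : Sym2 V → ℕ, G.IsMCColoring c ∧ (c '' G.edgeSet).ncard = n} :=
    ⟨c, hMC, hcount⟩
  have hbdd : BddAbove {n | ∃ c : Sym2 V → ℕ, G.IsMCColoring c ∧ (c '' G.edgeSet).ncard = n} := by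
    refine ⟨G.edgeSet.ncard, ?_⟩
    rintro x ⟨c', -, rfl⟩
    exact Set.ncard_image_le G.edgeSet.toFinite
  have hmc : 1 + (G.edgeSet.ncard - T.edgeSet.ncard) ≤ G.mc := le_csSup hbdd hmem
  have hEcard : T.edgeSet.ncard ≤ G.edgeSet.ncard := Set.ncard_le_ncard hsub G.edgeSet.toFinite
  omega


lemma aux_first_edge_mem {u v : V} {G : SimpleGraph V} (q : G.Walk u v) (hq : ¬ q.Nil) :
    (q.firstDart hq).edge ∈ q.edges := by
  cases q with
  | nil => simp at hq
  | cons h r =>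
    rw [Walk.edge_firstDart]
    simp [Walk.getVert_cons_succ, Walk.getVert_zero, Walk.edges_cons]

lemma aux_mc_upper [Fintype V] {G : SimpleGraph V} {c : Sym2 V → ℕ} (hmc : G.IsMCColoring c)
    {ι : Type*} [Fintype ι] [Nonempty ι] (a b : ι → V)
    (hab : ∀ i j, a i ≠ b j) (hainj : Function.Injective a) (hbinj : Function.Injective b)
    (hnadj : ∀ i, ¬ G.Adj (a i) (b i)) :
    (c '' G.edgeSet).ncard + Fintype.card ι ≤ G.edgeSet.ncard := by
  classical
  have H : ∀ i, ∃ p : G.Walk (a i) (b i), p.IsPath ∧ ∃ k, ∀ e ∈ p.edges, c e = k := by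
    intro i
    obtain ⟨w, k, hk⟩ := hmc (a i) (b i)
    exact ⟨w.bypass, w.bypass_isPath, k, fun e he => hk e (w.edges_bypass_subset he)⟩
  choose p hpath κ hcol using H
  have hnotnil : ∀ i, ¬ (p i).Nil := fun i => Walk.not_nil_of_ne (hab i i)
  have hnotnilr : ∀ i, ¬ (p i).reverse.Nil := fun i => Walk.not_nil_of_ne (hab i i).symm
  set E := G.edgeFinset with hE
  set I := E.image c with hI
  set P := (Finset.univ : Finset ι).image κ with hP
  -- the dart families
  set φ : ι × Bool → G.Dart := fun x =>
    if h : x.2 then (p x.1).firstDart (hnotnil x.1)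
    else (p x.1).reverse.firstDart (hnotnilr x.1) with hφ
  set ψ : ι × Bool → V := fun x => if x.2 then a x.1 else b x.1 with hψ
  have hφψ : ∀ x, (φ x).fst = ψ x := by
    rintro ⟨i, (_|_)⟩ <;> simp [hφ, hψ]
  have hψinj : Function.Injective ψ := by
    rintro ⟨i, (_|_)⟩ ⟨j, (_|_)⟩ h <;> simp [hψ] at h ⊢
    · exact hbinj h
    · exact absurd h.symm (hab j i)
    · exact absurd h (hab i j)
    · exact hainj h
  have hφinj : Function.Injective φ := by
    intro x y h
    exact hψinj (by rw [← hφψ, ← hφψ, h])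
  have hφcol : ∀ i bb, c (φ (i, bb)).edge = κ i := by
    intro i bb
    cases bb with
    | true =>
      exact hcol i _ (by simpa [hφ] using aux_first_edge_mem (p i) (hnotnil i))
    | false =>
      refine hcol i _ ?_
      have := aux_first_edge_mem (p i).reverse (hnotnilr i)
      rw [Walk.edges_reverse, List.mem_reverse] at this
      simpa [hφ] using this
  -- the key per-color bound
  have key : ∀ k ∈ P, ((Finset.univ : Finset ι).filter (fun i => κ i = k)).card + 1 ≤
      (E.filter (fun e => c e = k)).card := by
    intro k hk
    set F := (Finset.univ : Finset ι).filter (fun i => κ i = k) with hF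
    set S := E.filter (fun e => c e = k) with hS
    set D := (Finset.univ : Finset G.Dart).filter (fun d => c d.edge = k) with hD
    have hDS : D.card ≤ 2 * S.card := by
      have hmaps : ∀ d ∈ D, d.edge ∈ S := by
        intro d hd
        rw [hS, mem_filter]
        exact ⟨mem_edgeFinset.mpr d.edge_mem, (mem_filter.mp hd).2⟩
      rw [Finset.card_eq_sum_card_fiberwise hmaps]
      have hfib : ∀ e ∈ S, (D.filter (fun d => d.edge = e)).card ≤ 2 := by
        intro e heS
        induction e using Sym2.ind with
        | _ u v =>
          have hadj : G.Adj u v := by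
            have : s(u, v) ∈ E := (mem_filter.mp heS).1
            exact mem_edgeFinset.mp this
          have hsub : D.filter (fun d => d.edge = s(u, v)) ⊆
              {SimpleGraph.Dart.mk (u, v) hadj, (SimpleGraph.Dart.mk (u, v) hadj).symm} := by
            intro d hd
            have : d.edge = (SimpleGraph.Dart.mk (u, v) hadj).edge := (mem_filter.mp hd).2
            rcases (dart_edge_eq_iff _ _).mp this with h | h
            · exact mem_insert.mpr (Or.inl h)
            · exact mem_insert.mpr (Or.inr (mem_singleton.mpr h))
          calc (D.filter (fun d => d.edge = s(u, v))).card ≤ _ := Finset.card_le_card hsub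
            _ ≤ 2 := (Finset.card_insert_le _ _).trans (by simp)
      calc ∑ e ∈ S, (D.filter (fun d => d.edge = e)).card ≤ ∑ e ∈ S, 2 :=
            Finset.sum_le_sum hfib
        _ = 2 * S.card := by rw [Finset.sum_const, smul_eq_mul, mul_comm]
    set C := (F ×ˢ (Finset.univ : Finset Bool)).image φ with hC
    have hCD : C ⊆ D := by
      intro d hd
      obtain ⟨⟨i, bb⟩, hmem, rfl⟩ := mem_image.mp hd
      have hiF : κ i = k := (mem_filter.mp (mem_product.mp hmem).1).2
      rw [hD, mem_filter]
      exact ⟨mem_univ _, by rw [hφcol i bb, hiF]⟩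
    have hCcard : C.card = 2 * F.card := by
      rw [hC, Finset.card_image_of_injective _ hφinj, Finset.card_product]
      simp [mul_comm]
    by_contra hlt
    push_neg at hlt
    have hSF : S.card ≤ F.card := by omega
    have hCeqD : C = D := by
      apply Finset.eq_of_subset_of_card_le hCD
      calc D.card ≤ 2 * S.card := hDS
        _ ≤ 2 * F.card := by omega
        _ = C.card := hCcard.symm
    -- pick an index with this color
    obtain ⟨i₀, -, hi₀⟩ := mem_image.mp hk
    have hi₀F : i₀ ∈ F := mem_filter.mpr ⟨mem_univ _, hi₀⟩
    -- decompose the path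
    obtain ⟨x, h1, q1, hq1⟩ := (Walk.not_nil_iff).mp (hnotnil i₀)
    have hq1nn : ¬ q1.Nil := fun hnil => hnadj i₀ (hnil.eq ▸ h1)
    obtain ⟨y, h2, q2, hq2⟩ := (Walk.not_nil_iff).mp hq1nn
    have hedges : (p i₀).edges = s(a i₀, x) :: s(x, y) :: q2.edges := by
      rw [hq1, hq2, Walk.edges_cons, Walk.edges_cons]
    have hne12 : s(a i₀, x) ≠ s(x, y) := by
      have hnodup := (hpath i₀).edges_nodup
      rw [hedges] at hnodup
      exact fun h => (List.nodup_cons.mp hnodup).1 (h ▸ List.mem_cons_self)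
    have he1 : s(a i₀, x) ∈ (p i₀).edges := by rw [hedges]; exact List.mem_cons_self
    have he2 : s(x, y) ∈ (p i₀).edges := by
      rw [hedges]; exact List.mem_cons_of_mem _ List.mem_cons_self
    set d1s : G.Dart := SimpleGraph.Dart.mk (x, a i₀) h1.symm with hd1s
    set d2 : G.Dart := SimpleGraph.Dart.mk (x, y) h2 with hd2
    have hd1sD : d1s ∈ D := by
      rw [hD, mem_filter]
      refine ⟨mem_univ _, ?_⟩
      have : d1s.edge = s(a i₀, x) := by rw [hd1s, Dart.edge_mk, Sym2.eq_swap]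
      rw [this, hcol i₀ _ he1, hi₀]
    have hd2D : d2 ∈ D := by
      rw [hD, mem_filter]
      refine ⟨mem_univ _, ?_⟩
      have : d2.edge = s(x, y) := rfl
      rw [this, hcol i₀ _ he2, hi₀]
    -- two elements of C with the same source are equal
    have hsame : ∀ d d' : G.Dart, d ∈ C → d' ∈ C → d.fst = d'.fst → d = d' := by
      intro d d' hd hd' hff
      obtain ⟨u, -, rfl⟩ := mem_image.mp hd
      obtain ⟨u', -, rfl⟩ := mem_image.mp hd'
      rw [hφψ, hφψ] at hff
      rw [hψinj hff]
    have : d1s = d2 := by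
      apply hsame <;> try rw [hCeqD]
      · exact hd1sD
      · exact hd2D
      · rfl
    have hy : a i₀ = y := congrArg (fun d : G.Dart => d.snd) this
    exact hne12 (by rw [← hy, Sym2.eq_swap])
  -- assemble the counting
  have hPsubI : P ⊆ I := by
    intro k hk
    obtain ⟨i, -, rfl⟩ := mem_image.mp hk
    refine mem_image.mpr ⟨((p i).firstDart (hnotnil i)).edge,
      mem_edgeFinset.mpr (Dart.edge_mem _), hcol i _ (aux_first_edge_mem _ _)⟩
  have hEsum : E.card = ∑ k ∈ I, (E.filter (fun e => c e = k)).card :=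
    Finset.card_eq_sum_card_fiberwise (fun e he => mem_image_of_mem c he)
  have hsplit : ∑ k ∈ I \ P, (E.filter (fun e => c e = k)).card
      + ∑ k ∈ P, (E.filter (fun e => c e = k)).card
      = ∑ k ∈ I, (E.filter (fun e => c e = k)).card := Finset.sum_sdiff hPsubI
  have hbound1 : (I \ P).card ≤ ∑ k ∈ I \ P, (E.filter (fun e => c e = k)).card := by
    have h1 : ∀ k ∈ I \ P, 1 ≤ (E.filter (fun e => c e = k)).card := by
      intro k hk
      obtain ⟨e, he, rfl⟩ := mem_image.mp (mem_sdiff.mp hk).1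
      exact Finset.card_pos.mpr ⟨e, mem_filter.mpr ⟨he, rfl⟩⟩
    simpa using Finset.card_nsmul_le_sum (I \ P) _ 1 h1
  have hbound2 : ∑ k ∈ P, (((Finset.univ : Finset ι).filter (fun i => κ i = k)).card + 1)
      ≤ ∑ k ∈ P, (E.filter (fun e => c e = k)).card := Finset.sum_le_sum key
  have hcardι : ∑ k ∈ P, ((Finset.univ : Finset ι).filter (fun i => κ i = k)).card
      = Fintype.card ι := by
    rw [← Finset.card_eq_sum_card_fiberwise (fun i _ => mem_image_of_mem κ (mem_univ i)),
      Finset.card_univ]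
  have hsum2 : ∑ k ∈ P, (((Finset.univ : Finset ι).filter (fun i => κ i = k)).card + 1)
      = Fintype.card ι + P.card := by
    rw [Finset.sum_add_distrib, hcardι, Finset.sum_const, smul_eq_mul, mul_one]
  have hsd : (I \ P).card = I.card - P.card := Finset.card_sdiff_of_subset hPsubI
  have hPI : P.card ≤ I.card := Finset.card_le_card hPsubI
  have hfinal : I.card + Fintype.card ι ≤ E.card := by omega
  -- translate to ncard
  have h1 : (c '' G.edgeSet).ncard = I.card := by
    rw [hI, ← Set.ncard_coe_finset, Finset.coe_image, hE, coe_edgeFinset]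
  have h2 : G.edgeSet.ncard = E.card := by
    rw [← Set.ncard_coe_finset, hE, coe_edgeFinset]
  omega

lemma aux_two_le_card [Fintype V] {G : SimpleGraph V} (h : 1 ≤ G.edgeSet.ncard) :
    2 ≤ Fintype.card V := by
  have hne : G.edgeSet.Nonempty := by
    rw [← Set.ncard_pos G.edgeSet.toFinite]
    omega
  obtain ⟨ed, hed⟩ := hne
  induction ed using Sym2.ind with
  | _ u v =>
    have hadj : G.Adj u v := hed
    exact Fintype.one_lt_card_iff_nontrivial.mpr ⟨u, v, hadj.ne⟩

end AuxMC

section AuxStrong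

variable {α β : Type*} {G : SimpleGraph α} {H : SimpleGraph β}


lemma aux_strong_reach (hG : G.Connected) (hH : H.Connected) (g g' : α) (h h' : β) :
    (G.strongProd H).Reachable (g, h) (g', h') := by
  have step1 : (G.strongProd H).Reachable (g, h) (g', h) :=
    Reachable.map (⟨fun x => (x, h), fun hadj => Or.inl ⟨hadj, rfl⟩⟩ : G →g (G.strongProd H))
      (hG.preconnected g g')
  have step2 : (G.strongProd H).Reachable (g', h) (g', h') :=
    Reachable.map (⟨fun x => (g', x), fun hadj => Or.inr (Or.inl ⟨rfl, hadj⟩)⟩ :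
      H →g (G.strongProd H)) (hH.preconnected h h')
  exact step1.trans step2

lemma aux_strong_connected (hG : G.Connected) (hH : H.Connected) :
    (G.strongProd H).Connected := by
  haveI : Nonempty α := hG.nonempty
  haveI : Nonempty β := hH.nonempty
  exact ⟨fun x y => aux_strong_reach hG hH x.1 y.1 x.2 y.2⟩

lemma aux_strong_not_adj_right {h h' : β} (hna : ¬ H.Adj h h') (g : α) :
    ¬ (G.strongProd H).Adj (g, h) (g, h') := by
  rintro (⟨hadj, -⟩ | ⟨-, hadj⟩ | ⟨hadj, -⟩)
  · exact G.loopless.irrefl _ hadj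
  · exact hna hadj
  · exact G.loopless.irrefl _ hadj

lemma aux_strong_not_adj_left {g g' : α} (hna : ¬ G.Adj g g') (h : β) :
    ¬ (G.strongProd H).Adj (g, h) (g', h) := by
  rintro (⟨hadj, -⟩ | ⟨-, hadj⟩ | ⟨hadj, -⟩)
  · exact hna hadj
  · exact H.loopless.irrefl _ hadj
  · exact hna hadj

lemma aux_not_top (hG : G ≠ ⊤) : ∃ x y, x ≠ y ∧ ¬ G.Adj x y := by
  by_contra hcon
  push_neg at hcon
  apply hG
  ext x y
  exact ⟨fun h => h.ne, fun h => hcon x y h⟩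

lemma aux_edge_count [Fintype α] [Fintype β] (G : SimpleGraph α) (H : SimpleGraph β) :
    (G.strongProd H).edgeSet.ncard =
      G.edgeSet.ncard * Fintype.card β + H.edgeSet.ncard * Fintype.card α +
        2 * (G.edgeSet.ncard * H.edgeSet.ncard) := by
  classical
  set f : (G.Dart × β) ⊕ (α × H.Dart) ⊕ (G.Dart × H.Dart) → (G.strongProd H).Dart :=
    fun x => match x with
    | Sum.inl (d, h) => ⟨((d.fst, h), (d.snd, h)), Or.inl ⟨d.adj, rfl⟩⟩
    | Sum.inr (Sum.inl (g, d)) => ⟨((g, d.fst), (g, d.snd)), Or.inr (Or.inl ⟨rfl, d.adj⟩)⟩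
    | Sum.inr (Sum.inr (d, d')) =>
        ⟨((d.fst, d'.fst), (d.snd, d'.snd)), Or.inr (Or.inr ⟨d.adj, d'.adj⟩)⟩
    with hf
  have hbij : Function.Bijective f := by
    constructor
    · rintro (⟨d, h⟩ | ⟨g, d⟩ | ⟨d, d'⟩) (⟨e, h2⟩ | ⟨g2, e⟩ | ⟨e, e'⟩) heq <;>
        simp only [hf, Dart.ext_iff, Prod.ext_iff] at heq <;>
        obtain ⟨⟨h1, h2⟩, h3, h4⟩ := heq <;>
        first
          | exact congrArg Sum.inl (congrArg₂ Prod.mk (Dart.ext _ _ (Prod.ext h1 h3)) h2)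
          | exact congrArg Sum.inr (congrArg Sum.inl
              (congrArg₂ Prod.mk h1 (Dart.ext _ _ (Prod.ext h2 h4))))
          | exact congrArg Sum.inr (congrArg Sum.inr
              (congrArg₂ Prod.mk (Dart.ext _ _ (Prod.ext h1 h3)) (Dart.ext _ _ (Prod.ext h2 h4))))
          | exact absurd (h1.trans h3.symm) (Dart.fst_ne_snd _)
          | exact absurd (h1.symm.trans h3) (Dart.fst_ne_snd _)
          | exact absurd (h2.trans h4.symm) (Dart.fst_ne_snd _)
          | exact absurd (h2.symm.trans h4) (Dart.fst_ne_snd _)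
    · rintro ⟨⟨⟨g, h⟩, ⟨g', h'⟩⟩, (⟨hadj, heq⟩ | ⟨heq, hadj⟩ | ⟨hadj, hadj'⟩)⟩
      · dsimp only at heq
        subst heq
        exact ⟨Sum.inl (⟨(g, g'), hadj⟩, h), rfl⟩
      · dsimp only at heq
        subst heq
        exact ⟨Sum.inr (Sum.inl (g, ⟨(h, h'), hadj⟩)), rfl⟩
      · exact ⟨Sum.inr (Sum.inr (⟨(g, g'), hadj⟩, ⟨(h, h'), hadj'⟩)), rfl⟩
  have hcard := Fintype.card_of_bijective hbij
  rw [Fintype.card_sum, Fintype.card_sum, Fintype.card_prod, Fintype.card_prod,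
    Fintype.card_prod, dart_card_eq_twice_card_edges, dart_card_eq_twice_card_edges,
    dart_card_eq_twice_card_edges] at hcard
  have h1 : (G.strongProd H).edgeSet.ncard = (G.strongProd H).edgeFinset.card :=
    Set.ncard_eq_toFinset_card' _
  have h2 : G.edgeSet.ncard = G.edgeFinset.card := Set.ncard_eq_toFinset_card' _
  have h3 : H.edgeSet.ncard = H.edgeFinset.card := Set.ncard_eq_toFinset_card' _
  rw [h1, h2, h3]
  have hring : 2 * (G.edgeFinset.card * Fintype.card β + H.edgeFinset.card * Fintype.card α +
      2 * (G.edgeFinset.card * H.edgeFinset.card)) =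
      2 * G.edgeFinset.card * Fintype.card β + (Fintype.card α * (2 * H.edgeFinset.card) +
        2 * G.edgeFinset.card * (2 * H.edgeFinset.card)) := by ring
  omega

end AuxStrong

/-- Theorem 2.3(1): for connected `G`, `H`, at least one not complete, neither a tree:
`mc(G ⊠ H) ≥ max{|E(G)||V(H)| + 2|E(G)||E(H)| + 2, |E(H)||V(G)| + 2|E(G)||E(H)| + 2}` and
`mc(G ⊠ H) ≤ |E(G)||V(H)| + |E(H)||V(G)| + 2|E(G)||E(H)| - min{|V(G)|, |V(H)|} + 1`. -/
theorem mc_strongProd_of_not_tree {α β : Type*} [Fintype α] [Fintype β]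
    (G : SimpleGraph α) (H : SimpleGraph β)
    (hG : G.Connected) (hH : H.Connected)
    (hc : G ≠ ⊤ ∨ H ≠ ⊤)
    (hGt : ¬ G.IsTree) (hHt : ¬ H.IsTree) :
    max (G.edgeSet.ncard * Nat.card β + 2 * G.edgeSet.ncard * H.edgeSet.ncard + 2)
        (H.edgeSet.ncard * Nat.card α + 2 * G.edgeSet.ncard * H.edgeSet.ncard + 2) ≤
      (G.strongProd H).mc ∧
    (G.strongProd H).mc ≤
      G.edgeSet.ncard * Nat.card β + H.edgeSet.ncard * Nat.card α +
        2 * G.edgeSet.ncard * H.edgeSet.ncard - min (Nat.card α) (Nat.card β) + 1 := by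
  classical
  haveI : Nonempty α := hG.nonempty
  haveI : Nonempty β := hH.nonempty
  simp only [Nat.card_eq_fintype_card]
  set Γ := G.strongProd H with hΓ
  have hen : Fintype.card α ≤ G.edgeSet.ncard := aux_card_le_of_not_tree hG hGt
  have hfm : Fintype.card β ≤ H.edgeSet.ncard := aux_card_le_of_not_tree hH hHt
  have hn1 : 1 ≤ Fintype.card α := Fintype.card_pos
  have hm1 : 1 ≤ Fintype.card β := Fintype.card_pos
  have hn2 : 2 ≤ Fintype.card α := aux_two_le_card (G := G) (by omega)
  have hm2 : 2 ≤ Fintype.card β := aux_two_le_card (G := H) (by omega)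
  have hE : Γ.edgeSet.ncard =
      G.edgeSet.ncard * Fintype.card β + H.edgeSet.ncard * Fintype.card α +
        2 * (G.edgeSet.ncard * H.edgeSet.ncard) := aux_edge_count G H
  have hconn : Γ.Connected := aux_strong_connected hG hH
  have hcardprod : Fintype.card (α × β) = Fintype.card α * Fintype.card β :=
    Fintype.card_prod α β
  have hfn : Fintype.card α * Fintype.card β ≤ H.edgeSet.ncard * Fintype.card α := by
    calc Fintype.card α * Fintype.card β = Fintype.card β * Fintype.card α := mul_comm _ _
      _ ≤ H.edgeSet.ncard * Fintype.card α := Nat.mul_le_mul_right _ hfm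
  have hem : Fintype.card α * Fintype.card β ≤ G.edgeSet.ncard * Fintype.card β :=
    Nat.mul_le_mul_right _ hen
  -- lower bound
  have hlow : Γ.edgeSet.ncard + 2 ≤ Γ.mc + Fintype.card α * Fintype.card β := by
    have h2 : 2 ≤ Fintype.card (α × β) := by
      rw [hcardprod]
      calc 2 ≤ Fintype.card α := hn2
        _ = Fintype.card α * 1 := (mul_one _).symm
        _ ≤ Fintype.card α * Fintype.card β := Nat.mul_le_mul_left _ hm1
    have := aux_mc_lower Γ hconn h2
    rwa [hcardprod] at this
  -- upper bound on each MC-coloring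
  have hup : Γ.mc ≤ Γ.edgeSet.ncard - min (Fintype.card α) (Fintype.card β) := by
    rw [SimpleGraph.mc]
    refine csSup_le' ?_
    rintro x ⟨c, hcmc, rfl⟩
    have hkey : (c '' Γ.edgeSet).ncard + min (Fintype.card α) (Fintype.card β) ≤
        Γ.edgeSet.ncard := by
      rcases hc with hGtop | hHtop
      · obtain ⟨g0, g0', hgne, hgna⟩ := aux_not_top hGtop
        have := aux_mc_upper hcmc (fun h => (g0, h)) (fun h => (g0', h))
          (fun i j heq => hgne (congrArg Prod.fst heq))
          (fun i j heq => by simpa using congrArg Prod.snd heq)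
          (fun i j heq => by simpa using congrArg Prod.snd heq)
          (fun h => aux_strong_not_adj_left hgna h)
        have hmin : min (Fintype.card α) (Fintype.card β) ≤ Fintype.card β := min_le_right _ _
        omega
      · obtain ⟨h0, h0', hhne, hhna⟩ := aux_not_top hHtop
        have := aux_mc_upper hcmc (fun g => (g, h0)) (fun g => (g, h0'))
          (fun i j heq => hhne (congrArg Prod.snd heq))
          (fun i j heq => by simpa using congrArg Prod.fst heq)
          (fun i j heq => by simpa using congrArg Prod.fst heq)
          (fun g => aux_strong_not_adj_right hhna g)
        have hmin : min (Fintype.card α) (Fintype.card β) ≤ Fintype.card α := min_le_left _ _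
        omega
    omega
  -- final arithmetic
  rw [show 2 * G.edgeSet.ncard * H.edgeSet.ncard
      = 2 * (G.edgeSet.ncard * H.edgeSet.ncard) from mul_assoc 2 _ _]
  rw [hE] at hlow hup
  set X := G.edgeSet.ncard * Fintype.card β with hX
  set Y := H.edgeSet.ncard * Fintype.card α with hY
  set Z := G.edgeSet.ncard * H.edgeSet.ncard with hZ
  set D := Fintype.card α * Fintype.card β with hD
  set W := min (Fintype.card α) (Fintype.card β) with hW
  constructor
  · apply max_le <;> omega
  · omega
end

section
/- Let G and H be connected non-bipartite graphs. Then |E(G)|·|E(H)| + 2 ≤ mc(G × H) ≤ 2·|E(G)|·|E(H)| + 1. -/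
open SimpleGraph

section MCHelpers

open SimpleGraph Walk

variable {α β : Type*}

private theorem mc_oddClosed {G : SimpleGraph α} (hG : G.Connected) (hGb : ¬ G.Colorable 2)
    (v : α) : ∃ w : G.Walk v v, Odd w.length := by
  classical
  by_contra hodd
  push_neg at hodd
  have hc : ∀ w : G.Walk v v, Even w.length := by
    intro w; rcases Nat.even_or_odd w.length with h | h
    · exact h
    · exact absurd h (hodd w)
  apply hGb
  have wlk : ∀ u, G.Walk v u := fun u => (hG.preconnected v u).some
  refine ⟨SimpleGraph.Coloring.mk (fun u => if Even (wlk u).length then 0 else 1) ?_⟩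
  intro a b hab heq
  have key : Even ((wlk a).length + (wlk b).length) := by
    by_cases h : Even (wlk a).length
    · have h2 : Even (wlk b).length := by
        by_contra h2; simp [h, h2] at heq
      exact h.add h2
    · have h2 : ¬ Even (wlk b).length := by
        by_contra h2; simp [h, h2] at heq
      exact (Nat.not_even_iff_odd.1 h).add_odd (Nat.not_even_iff_odd.1 h2)
  have hodd' := hc (((wlk a).append (Walk.cons hab Walk.nil)).append (wlk b).reverse)
  rw [Walk.length_append, Walk.length_append, Walk.length_reverse, Walk.length_cons,
    Walk.length_nil] at hodd'
  rcases key with ⟨k, hk⟩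
  rcases hodd' with ⟨m, hm⟩
  omega

private theorem mc_zipWalk {G : SimpleGraph α} {H : SimpleGraph β} {g g' : α} {h h' : β}
    (p : G.Walk g g') (q : H.Walk h h') (hl : p.length = q.length) :
    Nonempty ((G.tensorProd H).Walk (g, h) (g', h')) := by
  induction p generalizing h h' q with
  | nil =>
    have : h = h' := SimpleGraph.Walk.eq_of_length_eq_zero hl.symm
    subst this; exact ⟨.nil⟩
  | cons ha p ih =>
    cases q with
    | nil => simp at hl
    | cons hb q =>
      obtain ⟨w⟩ := ih q (by simpa using hl)
      exact ⟨.cons ⟨ha, hb⟩ w⟩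

private theorem mc_nbr {G : SimpleGraph α} (hG : G.Connected) (hGb : ¬ G.Colorable 2)
    (u : α) : ∃ w, G.Adj u w := by
  obtain ⟨c, hc⟩ := mc_oddClosed hG hGb u
  cases c with
  | nil => simp [Nat.odd_iff] at hc
  | cons h p => exact ⟨_, h⟩

private theorem mc_pad2 {G : SimpleGraph α} {u v w : α} (p : G.Walk u v) (hu : G.Adj u w) :
    ∀ k, ∃ q : G.Walk u v, q.length = p.length + 2 * k := by
  intro k
  induction k with
  | zero => exact ⟨p, by simp⟩
  | succ n ih =>
    obtain ⟨q, hq⟩ := ih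
    exact ⟨.cons hu (.cons hu.symm q), by simp [hq]; ring⟩

private theorem mc_sameLength {G : SimpleGraph α} {H : SimpleGraph β}
    (hG : G.Connected) (hH : H.Connected) (hGb : ¬ G.Colorable 2) (hHb : ¬ H.Colorable 2)
    (g g' : α) (h h' : β) :
    ∃ (p : G.Walk g g') (q : H.Walk h h'), p.length = q.length := by
  obtain ⟨p0⟩ := hG.preconnected g g'
  obtain ⟨q0⟩ := hH.preconnected h h'
  obtain ⟨c, hc⟩ := mc_oddClosed hH hHb h'
  obtain ⟨q1, hq1⟩ : ∃ q1 : H.Walk h h', Even (p0.length + q1.length) := by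
    rcases Nat.even_or_odd (p0.length + q0.length) with he | ho
    · exact ⟨q0, he⟩
    · refine ⟨q0.append c, ?_⟩
      rw [Walk.length_append]
      rcases hc with ⟨a, ha⟩; rcases ho with ⟨b, hb⟩
      exact ⟨b + a + 1, by omega⟩
  obtain ⟨wg, hwg⟩ := mc_nbr hG hGb g
  obtain ⟨wh, hwh⟩ := mc_nbr hH hHb h
  rcases le_or_gt p0.length q1.length with hle | hlt
  · obtain ⟨k, hk⟩ : ∃ k, q1.length = p0.length + 2 * k := by
      rcases hq1 with ⟨m, hm⟩; exact ⟨m - p0.length, by omega⟩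
    obtain ⟨p, hp⟩ := mc_pad2 p0 hwg k
    exact ⟨p, q1, by omega⟩
  · obtain ⟨k, hk⟩ : ∃ k, p0.length = q1.length + 2 * k := by
      rcases hq1 with ⟨m, hm⟩; exact ⟨m - q1.length, by omega⟩
    obtain ⟨q, hq⟩ := mc_pad2 q1 hwh k
    exact ⟨p0, q, by omega⟩

private theorem mc_tensorConnected {G : SimpleGraph α} {H : SimpleGraph β}
    (hG : G.Connected) (hH : H.Connected) (hGb : ¬ G.Colorable 2) (hHb : ¬ H.Colorable 2) :
    (G.tensorProd H).Connected := by
  have : Nonempty α := hG.nonempty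
  have : Nonempty β := hH.nonempty
  refine ⟨fun x y => ?_⟩
  obtain ⟨p, q, hpq⟩ := mc_sameLength hG hH hGb hHb x.1 y.1 x.2 y.2
  obtain ⟨w⟩ := mc_zipWalk p q hpq
  exact ⟨w.copy (by simp) (by simp)⟩

private def mc_dartEquiv (G : SimpleGraph α) (H : SimpleGraph β) :
    (G.tensorProd H).Dart ≃ G.Dart × H.Dart where
  toFun d := (⟨(d.toProd.1.1, d.toProd.2.1), d.adj.1⟩, ⟨(d.toProd.1.2, d.toProd.2.2), d.adj.2⟩)
  invFun x := ⟨((x.1.toProd.1, x.2.toProd.1), (x.1.toProd.2, x.2.toProd.2)), x.1.adj, x.2.adj⟩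
  left_inv _ := rfl
  right_inv _ := rfl

private theorem mc_edgecount [Fintype α] [Fintype β] (G : SimpleGraph α) (H : SimpleGraph β) :
    (G.tensorProd H).edgeSet.ncard = 2 * G.edgeSet.ncard * H.edgeSet.ncard := by
  classical
  have h1 : Fintype.card (G.tensorProd H).Dart = 2 * (G.tensorProd H).edgeFinset.card :=
    dart_card_eq_twice_card_edges _
  have h2 : Fintype.card G.Dart = 2 * G.edgeFinset.card := dart_card_eq_twice_card_edges _
  have h3 : Fintype.card H.Dart = 2 * H.edgeFinset.card := dart_card_eq_twice_card_edges _
  have h4 : Fintype.card (G.tensorProd H).Dart = Fintype.card G.Dart * Fintype.card H.Dart := by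
    rw [← Fintype.card_prod]; exact Fintype.card_congr (mc_dartEquiv G H)
  have e1 : (G.tensorProd H).edgeSet.ncard = (G.tensorProd H).edgeFinset.card := by
    rw [Set.ncard_eq_toFinset_card']; rfl
  have e2 : G.edgeSet.ncard = G.edgeFinset.card := by rw [Set.ncard_eq_toFinset_card']; rfl
  have e3 : H.edgeSet.ncard = H.edgeFinset.card := by rw [Set.ncard_eq_toFinset_card']; rfl
  have key : 2 * (G.tensorProd H).edgeFinset.card
      = 2 * (2 * G.edgeFinset.card * H.edgeFinset.card) := by
    rw [← h1, h4, h2, h3]; ring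
  rw [e1, e2, e3]
  omega

private theorem mc_parent {G : SimpleGraph α} (hG : G.Connected) (r : α) :
    ∃ par : α → α, ∀ x, x ≠ r → G.Adj x (par x) ∧ G.dist (par x) r + 1 = G.dist x r := by
  classical
  have key : ∀ x, x ≠ r → ∃ y, G.Adj x y ∧ G.dist y r + 1 = G.dist x r := by
    intro x hx
    obtain ⟨w, hw⟩ := (hG.preconnected x r).exists_walk_length_eq_dist
    cases w with
    | nil => exact absurd rfl hx
    | @cons _ y _ ha w' =>
      refine ⟨y, ha, ?_⟩
      have h1 : G.dist y r ≤ w'.length := dist_le w'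
      obtain ⟨w2, hw2⟩ := (hG.preconnected y r).exists_walk_length_eq_dist
      have h2 := dist_le (Walk.cons ha w2)
      simp only [Walk.length_cons] at hw h2
      omega
  choose par hpar using fun x : {x // x ≠ r} => key x.1 x.2
  refine ⟨fun x => if hx : x = r then x else par ⟨x, hx⟩, fun x hx => ?_⟩
  simpa [hx] using hpar ⟨x, hx⟩

private theorem mc_card_le_edges [Fintype α] {G : SimpleGraph α} (hG : G.Connected)
    (hGb : ¬ G.Colorable 2) : Fintype.card α ≤ G.edgeSet.ncard := by
  classical
  have : Nonempty α := hG.nonempty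
  obtain ⟨r⟩ := this
  obtain ⟨par, hpar⟩ := mc_parent hG r
  set A : Set (Sym2 α) := (fun x => s(x, par x)) '' {x | x ≠ r} with hA
  have hinj : Set.InjOn (fun x => s(x, par x)) {x | x ≠ r} := by
    intro x hx y hy hxy
    simp only [Sym2.eq_iff] at hxy
    rcases hxy with ⟨h1, -⟩ | ⟨h1, h2⟩
    · exact h1
    · exfalso
      have d1 := (hpar x hx).2
      have e1 := (hpar y hy).2
      rw [← h1] at e1
      rw [h2] at d1
      omega
  have hAcard : A.ncard = Fintype.card α - 1 := by
    rw [hA, Set.ncard_image_of_injOn hinj]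
    have : {x | x ≠ r} = Set.univ \ {r} := by ext x; simp
    rw [this, Set.ncard_diff (by simp), Set.ncard_univ, Set.ncard_singleton,
      Nat.card_eq_fintype_card]
  have hAsub : A ⊆ G.edgeSet := by
    rintro e ⟨x, hx, rfl⟩
    exact (hpar x hx).1
  obtain ⟨a, b, hab, hparity⟩ : ∃ a b, G.Adj a b ∧ (Even (G.dist a r) ↔ Even (G.dist b r)) := by
    by_contra hcon
    push_neg at hcon
    apply hGb
    refine ⟨SimpleGraph.Coloring.mk (fun u => if Even (G.dist u r) then 0 else 1) ?_⟩
    intro a b hadj heq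
    have := hcon a b hadj
    by_cases h : Even (G.dist a r) <;> by_cases h2 : Even (G.dist b r) <;>
      simp [h, h2] at heq this ⊢
  have he0 : s(a, b) ∉ A := by
    rintro ⟨x, hx, hxe⟩
    have d1 := (hpar x hx).2
    have hflip : ¬ (Even (G.dist x r) ↔ Even (G.dist (par x) r)) := by
      intro hiff
      rw [← d1, Nat.even_add_one] at hiff
      tauto
    simp only [Sym2.eq_iff] at hxe
    rcases hxe with ⟨h1, h2⟩ | ⟨h1, h2⟩ <;> [skip; skip] <;>
      · subst h1; subst h2; first | exact hflip hparity | exact hflip hparity.symm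
  have hins : insert s(a, b) A ⊆ G.edgeSet := by
    rintro e (rfl | he)
    · exact hab
    · exact hAsub he
  have hcard2 : (insert s(a, b) A).ncard = Fintype.card α := by
    rw [Set.ncard_insert_of_notMem he0 (Set.toFinite _), hAcard]
    have : 1 ≤ Fintype.card α := Fintype.card_pos_iff.mpr ⟨r⟩
    omega
  calc Fintype.card α = (insert s(a, b) A).ncard := hcard2.symm
    _ ≤ G.edgeSet.ncard := Set.ncard_le_ncard hins (Set.toFinite _)

private theorem mc_reachRoot {G : SimpleGraph α} (r : α) (par : α → α)
    (hpar : ∀ x, x ≠ r → G.Adj x (par x) ∧ G.dist (par x) r + 1 = G.dist x r) (x : α) :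
    (fromEdgeSet ((fun x => s(x, par x)) '' {x | x ≠ r})).Reachable x r := by
  have H : ∀ n x, G.dist x r = n →
      (fromEdgeSet ((fun x => s(x, par x)) '' {x | x ≠ r})).Reachable x r := by
    intro n
    induction n using Nat.strong_induction_on with
    | _ n ih =>
      intro x hxd
      by_cases hxr : x = r
      · subst hxr; rfl
      · obtain ⟨hadj, hd⟩ := hpar x hxr
        have hadj' : (fromEdgeSet ((fun x => s(x, par x)) '' {x | x ≠ r})).Adj x (par x) := by
          rw [fromEdgeSet_adj]
          exact ⟨⟨x, hxr, rfl⟩, hadj.ne⟩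
        exact hadj'.reachable.trans (ih (G.dist (par x) r) (by omega) _ rfl)
  exact H _ x rfl

end MCHelpers

/-- Theorem 2.4: for connected non-bipartite `G` and `H`,
`|E(G)||E(H)| + 2 ≤ mc(G × H) ≤ 2|E(G)||E(H)| + 1`. -/
theorem mc_tensorProd {α β : Type*} [Fintype α] [Fintype β]
    (G : SimpleGraph α) (H : SimpleGraph β)
    (hG : G.Connected) (hH : H.Connected)
    (hGb : ¬ G.Colorable 2) (hHb : ¬ H.Colorable 2) :
    G.edgeSet.ncard * H.edgeSet.ncard + 2 ≤ (G.tensorProd H).mc ∧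
      (G.tensorProd H).mc ≤ 2 * G.edgeSet.ncard * H.edgeSet.ncard + 1 := by
  classical
  set Γ := G.tensorProd H with hΓ
  have hm : Γ.edgeSet.ncard = 2 * G.edgeSet.ncard * H.edgeSet.ncard := mc_edgecount G H
  have hΓconn : Γ.Connected := mc_tensorConnected hG hH hGb hHb
  constructor
  · -- lower bound
    obtain ⟨r⟩ : Nonempty (α × β) := hΓconn.nonempty
    obtain ⟨par, hpar⟩ := mc_parent hΓconn r
    set P : Set (Sym2 (α × β)) := (fun x => s(x, par x)) '' {x | x ≠ r} with hP
    have hPsub : P ⊆ Γ.edgeSet := by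
      rintro e ⟨x, hx, rfl⟩
      exact (hpar x hx).1
    have hPcard : P.ncard ≤ Fintype.card (α × β) - 1 := by
      refine le_trans (Set.ncard_image_le (Set.toFinite _)) ?_
      have : {x : α × β | x ≠ r} = Set.univ \ {r} := by ext x; simp
      rw [this, Set.ncard_diff (by simp), Set.ncard_univ, Set.ncard_singleton,
        Nat.card_eq_fintype_card]
    have hPne : P.Nonempty := by
      have : Nontrivial α := by
        obtain ⟨u⟩ := hG.nonempty
        obtain ⟨w, hw⟩ := mc_nbr hG hGb u
        exact ⟨u, w, hw.ne⟩
      have : Nonempty β := hH.nonempty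
      obtain ⟨x, hx⟩ := exists_ne r
      exact ⟨s(x, par x), x, hx, rfl⟩
    obtain ⟨ι, hι⟩ := Countable.exists_injective_nat (Sym2 (α × β))
    set c : Sym2 (α × β) → ℕ := fun e => if e ∈ P then 0 else ι e + 1 with hc
    have hMC : Γ.IsMCColoring c := by
      intro u v
      have hru := mc_reachRoot r par hpar u
      have hrv := mc_reachRoot r par hpar v
      obtain ⟨w⟩ := hru.trans hrv.symm
      have hedgeP : ∀ e ∈ w.edges, e ∈ P := by
        intro e he
        have h1 := w.edges_subset_edgeSet he
        rw [edgeSet_fromEdgeSet] at h1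
        exact h1.1
      have hsub : ∀ e ∈ w.edges, e ∈ Γ.edgeSet := fun e he => hPsub (hedgeP e he)
      refine ⟨w.transfer Γ hsub, 0, ?_⟩
      intro e he
      rw [Walk.edges_transfer] at he
      simp [hc, hedgeP e he]
    set B : Set (Sym2 (α × β)) := Γ.edgeSet \ P with hB
    have hBcard : B.ncard = Γ.edgeSet.ncard - P.ncard := Set.ncard_diff hPsub (Set.toFinite _)
    have himg : insert 0 (c '' B) ⊆ c '' Γ.edgeSet := by
      rintro k (rfl | ⟨e, he, rfl⟩)
      · obtain ⟨e0, he0⟩ := hPne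
        exact ⟨e0, hPsub he0, by simp [hc, he0]⟩
      · exact ⟨e, he.1, rfl⟩
    have hzero : (0 : ℕ) ∉ c '' B := by
      rintro ⟨e, he, hce⟩
      simp only [hc, if_neg he.2] at hce
      omega
    have hBinj : Set.InjOn c B := by
      intro e he f hf hef
      simp only [hc, if_neg he.2, if_neg hf.2] at hef
      exact hι (by omega)
    have hcount : B.ncard + 1 ≤ (c '' Γ.edgeSet).ncard := by
      calc B.ncard + 1 = (c '' B).ncard + 1 := by rw [Set.ncard_image_of_injOn hBinj]
        _ = (insert 0 (c '' B)).ncard := (Set.ncard_insert_of_notMem hzero (Set.toFinite _)).symm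
        _ ≤ (c '' Γ.edgeSet).ncard := Set.ncard_le_ncard himg (Set.toFinite _)
    have hmem : (c '' Γ.edgeSet).ncard ∈
        {n | ∃ c : Sym2 (α × β) → ℕ, Γ.IsMCColoring c ∧ (c '' Γ.edgeSet).ncard = n} :=
      ⟨c, hMC, rfl⟩
    have hbdd : BddAbove
        {n | ∃ c : Sym2 (α × β) → ℕ, Γ.IsMCColoring c ∧ (c '' Γ.edgeSet).ncard = n} := by
      refine ⟨Γ.edgeSet.ncard, ?_⟩
      rintro n ⟨c', -, rfl⟩
      exact Set.ncard_image_le (Set.toFinite _)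
    have hle : (c '' Γ.edgeSet).ncard ≤ Γ.mc := le_csSup hbdd hmem
    -- arithmetic
    have hNG : Fintype.card α ≤ G.edgeSet.ncard := mc_card_le_edges hG hGb
    have hNH : Fintype.card β ≤ H.edgeSet.ncard := mc_card_le_edges hH hHb
    have hN : Fintype.card (α × β) ≤ G.edgeSet.ncard * H.edgeSet.ncard := by
      rw [Fintype.card_prod]
      exact Nat.mul_le_mul hNG hNH
    have hNpos : 1 ≤ Fintype.card (α × β) := Fintype.card_pos_iff.mpr ⟨r⟩
    have hm' : Γ.edgeSet.ncard = 2 * (G.edgeSet.ncard * H.edgeSet.ncard) := by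
      rw [hm]; ring
    have hPle : P.ncard ≤ Γ.edgeSet.ncard := Set.ncard_le_ncard hPsub (Set.toFinite _)
    omega
  · -- upper bound
    refine csSup_le' ?_
    rintro n ⟨c, -, rfl⟩
    calc (c '' Γ.edgeSet).ncard ≤ Γ.edgeSet.ncard := Set.ncard_image_le (Set.toFinite _)
      _ = 2 * G.edgeSet.ncard * H.edgeSet.ncard := hm
      _ ≤ 2 * G.edgeSet.ncard * H.edgeSet.ncard + 1 := Nat.le_succ _
end

section
/- Let G and H be connected non-bipartite graphs. Then mc(G × H) ≥ mc(G)·mc(H) + 2. -/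
open SimpleGraph

namespace MCAux
variable {V : Type*}

lemma mc_set_bddAbove [Finite V] (G : SimpleGraph V) :
    BddAbove {n | ∃ c : Sym2 V → ℕ, G.IsMCColoring c ∧ (c '' G.edgeSet).ncard = n} := by
  refine ⟨G.edgeSet.ncard, ?_⟩
  rintro n ⟨c, -, rfl⟩
  exact Set.ncard_image_le G.edgeSet.toFinite

lemma mc_set_nonempty (G : SimpleGraph V) (hG : G.Connected) :
    {n | ∃ c : Sym2 V → ℕ, G.IsMCColoring c ∧ (c '' G.edgeSet).ncard = n}.Nonempty := by
  refine ⟨((fun _ => 0) '' G.edgeSet).ncard, (fun _ => 0), ?_, rfl⟩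
  intro u v
  obtain ⟨w⟩ := hG u v
  exact ⟨w, 0, fun _ _ => rfl⟩

lemma le_mc [Finite V] (G : SimpleGraph V) {n : ℕ}
    (hn : n ∈ {n | ∃ c : Sym2 V → ℕ, G.IsMCColoring c ∧ (c '' G.edgeSet).ncard = n}) :
    n ≤ G.mc :=
  le_csSup (mc_set_bddAbove G) hn

lemma mc_le_ncard [Finite V] (G : SimpleGraph V) (hG : G.Connected) :
    G.mc ≤ G.edgeSet.ncard := by
  refine csSup_le (mc_set_nonempty G hG) ?_
  rintro n ⟨c, -, rfl⟩
  exact Set.ncard_image_le G.edgeSet.toFinite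

lemma one_le_mc [Finite V] (G : SimpleGraph V) (hG : G.Connected)
    (hne : G.edgeSet.Nonempty) : 1 ≤ G.mc := by
  refine le_mc G ⟨(fun _ => 0), ?_, ?_⟩
  · intro u v
    obtain ⟨w⟩ := hG u v
    exact ⟨w, 0, fun _ _ => rfl⟩
  · have : (fun (_ : Sym2 V) => 0) '' G.edgeSet = {0} := by
      apply Set.Subsingleton.eq_singleton_of_mem
      · rintro x ⟨-, -, rfl⟩ y ⟨-, -, rfl⟩; rfl
      · exact ⟨hne.choose, hne.choose_spec, rfl⟩
    rw [this, Set.ncard_singleton]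

lemma mc_mem [Finite V] (G : SimpleGraph V) (hG : G.Connected) :
    G.mc ∈ {n | ∃ c : Sym2 V → ℕ, G.IsMCColoring c ∧ (c '' G.edgeSet).ncard = n} :=
  Nat.sSup_mem (mc_set_nonempty G hG) (mc_set_bddAbove G)


def flip2 (x : Fin 2) : Fin 2 := if x = 0 then 1 else 0

lemma flip2_ne (x : Fin 2) : flip2 x ≠ x := by fin_cases x <;> decide

lemma flip2_inj : Function.Injective flip2 := by decide

lemma acyclic_colorable [Finite V] : ∀ (G : SimpleGraph V), G.IsAcyclic → G.Colorable 2 := by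
  have key : ∀ (n : ℕ) (G : SimpleGraph V), G.edgeSet.ncard = n → G.IsAcyclic → G.Colorable 2 := by
    intro n
    induction n using Nat.strong_induction_on with
    | _ n ih =>
      intro G hcard hA
      rcases Set.eq_empty_or_nonempty G.edgeSet with he | he
      · exact ⟨Coloring.mk (fun _ => 0) (by
          intro x y hxy
          exact absurd (G.mem_edgeSet.mpr hxy) (he ▸ Set.notMem_empty _) )⟩
      · obtain ⟨e, he⟩ := he
        induction e using Sym2.ind with
        | _ u b =>
        have hub : G.Adj u b := G.mem_edgeSet.mp he
        set G' : SimpleGraph V := G \ fromEdgeSet {s(u, b)} with hG'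
        have hle : G' ≤ G := sdiff_le
        have hE' : G'.edgeSet = G.edgeSet \ {s(u, b)} := by
          simp [hG', edgeSet_sdiff, edgeSet_fromEdgeSet, edgeSet_sdiff_sdiff_isDiag]
        have hA' : G'.IsAcyclic := fun v c hc => hA (c.mapLe hle) (hc.mapLe hle)
        have hcard' : G'.edgeSet.ncard = n - 1 := by
          rw [hE', Set.ncard_diff_singleton_of_mem he, hcard]
        have hn1 : n - 1 < n := by
          have h0 : 0 < n := by
            rw [← hcard]
            exact (Set.ncard_pos G.edgeSet.toFinite).mpr ⟨_, he⟩
          omega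
        obtain ⟨c'⟩ := ih (n-1) hn1 G' hcard' hA'
        have hbr : G.IsBridge s(u, b) :=
          (isAcyclic_iff_forall_adj_isBridge.mp hA) hub
        have hnr : ¬G'.Reachable u b := hbr
        classical
        refine ⟨Coloring.mk
          (fun v => if G'.Reachable b v ∧ c' u = c' b then flip2 (c' v) else c' v) ?_⟩
        intro x y hxy hceq
        by_cases hcase : s(x, y) = s(u, b)
        · have hkey : (if G'.Reachable b u ∧ c' u = c' b then flip2 (c' u) else c' u) ≠
              (if G'.Reachable b b ∧ c' u = c' b then flip2 (c' b) else c' b) := by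
            have h1 : ¬ G'.Reachable b u := fun h => hnr h.symm
            rw [if_neg (fun h => h1 h.1)]
            by_cases hcc : c' u = c' b
            · rw [if_pos ⟨Reachable.refl b, hcc⟩, hcc]
              exact fun h => flip2_ne (c' b) h.symm
            · rw [if_neg (fun h => hcc h.2)]
              exact hcc
          rw [Sym2.eq_iff] at hcase
          rcases hcase with ⟨hx, hy⟩ | ⟨hx, hy⟩
          · subst hx; subst hy; exact hkey hceq
          · subst hx; subst hy; exact hkey hceq.symm
        · have hxy' : G'.Adj x y := by
            rw [hG', sdiff_adj, fromEdgeSet_adj]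
            exact ⟨hxy, fun h => hcase h.1⟩
          have hreq : G'.Reachable b x ↔ G'.Reachable b y :=
            ⟨fun h => h.trans hxy'.reachable, fun h => h.trans hxy'.symm.reachable⟩
          have hcne : c' x ≠ c' y := c'.valid hxy'
          by_cases hr : G'.Reachable b x ∧ c' u = c' b
          · rw [if_pos hr, if_pos ⟨hreq.mp hr.1, hr.2⟩] at hceq
            exact hcne (flip2_inj hceq)
          · have hr' : ¬(G'.Reachable b y ∧ c' u = c' b) :=
              fun h => hr ⟨hreq.mpr h.1, h.2⟩
            rw [if_neg hr, if_neg hr'] at hceq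
            exact hcne hceq
  exact fun G => key G.edgeSet.ncard G rfl

lemma delete_connected {G : SimpleGraph V} {u b : V} (hG : G.Connected)
    (hnb : ¬G.IsBridge s(u, b)) (hub : G.Adj u b) :
    (G \ fromEdgeSet {s(u, b)}).Connected := by
  set G' : SimpleGraph V := G \ fromEdgeSet {s(u, b)} with hG'
  have hruv : G'.Reachable u b := by
    rw [isBridge_iff] at hnb
    push_neg at hnb
    exact hnb
  have step : ∀ x y : V, G.Adj x y → G'.Reachable x y := by
    intro x y hxy
    by_cases hcase : s(x, y) = s(u, b)
    · rw [Sym2.eq_iff] at hcase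
      rcases hcase with ⟨rfl, rfl⟩ | ⟨rfl, rfl⟩
      · exact hruv
      · exact hruv.symm
    · refine Adj.reachable ?_
      rw [hG', sdiff_adj, fromEdgeSet_adj]
      exact ⟨hxy, fun h => hcase h.1⟩
  haveI := hG.nonempty
  refine Connected.mk fun x y => ?_
  obtain ⟨w⟩ := hG x y
  induction w with
  | nil => exact Reachable.refl _
  | cons h p ih => exact (step _ _ h).trans ih

lemma connected_card_le [Fintype V] :
    ∀ (G : SimpleGraph V), G.Connected → Fintype.card V ≤ G.edgeSet.ncard + 1 := by
  classical
  have key : ∀ (n : ℕ) (G : SimpleGraph V), G.edgeSet.ncard = n → G.Connected →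
      Fintype.card V ≤ G.edgeSet.ncard + 1 := by
    intro n
    induction n using Nat.strong_induction_on with
    | _ n ih =>
      intro G hcard hG
      by_cases hA : G.IsAcyclic
      · have ht : G.IsTree := ⟨hG, hA⟩
        have := ht.card_edgeFinset
        rw [Set.ncard_eq_toFinset_card' G.edgeSet]
        rw [edgeFinset] at this
        omega
      · rw [isAcyclic_iff_forall_edge_isBridge] at hA
        push_neg at hA
        obtain ⟨e, he, hnb⟩ := hA
        induction e using Sym2.ind with
        | _ u b =>
        have hub : G.Adj u b := G.mem_edgeSet.mp he
        have hG' := delete_connected hG hnb hub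
        have hE' : (G \ fromEdgeSet {s(u, b)}).edgeSet = G.edgeSet \ {s(u, b)} := by
          simp [edgeSet_sdiff, edgeSet_fromEdgeSet, edgeSet_sdiff_sdiff_isDiag]
        have hcard' : (G \ fromEdgeSet {s(u, b)}).edgeSet.ncard = n - 1 := by
          rw [hE', Set.ncard_diff_singleton_of_mem he, hcard]
        have h0 : 0 < n := by
          rw [← hcard]
          exact (Set.ncard_pos G.edgeSet.toFinite).mpr ⟨_, he⟩
        have := ih (n-1) (by omega) _ hcard' hG'
        omega
  exact fun G => key G.edgeSet.ncard G rfl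

lemma card_le_ncard_of_not_colorable [Fintype V] (G : SimpleGraph V) (hG : G.Connected)
    (hGb : ¬ G.Colorable 2) : Fintype.card V ≤ G.edgeSet.ncard := by
  have hA : ¬ G.IsAcyclic := fun h => hGb (acyclic_colorable G h)
  rw [isAcyclic_iff_forall_edge_isBridge] at hA
  push_neg at hA
  obtain ⟨e, he, hnb⟩ := hA
  induction e using Sym2.ind with
  | _ u b =>
  have hub : G.Adj u b := G.mem_edgeSet.mp he
  have hG' := delete_connected hG hnb hub
  have hE' : (G \ fromEdgeSet {s(u, b)}).edgeSet = G.edgeSet \ {s(u, b)} := by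
    simp [edgeSet_sdiff, edgeSet_fromEdgeSet, edgeSet_sdiff_sdiff_isDiag]
  have hcard' : (G \ fromEdgeSet {s(u, b)}).edgeSet.ncard = G.edgeSet.ncard - 1 := by
    rw [hE', Set.ncard_diff_singleton_of_mem he]
  have h0 : 0 < G.edgeSet.ncard := (Set.ncard_pos G.edgeSet.toFinite).mpr ⟨_, he⟩
  have := connected_card_le _ hG'
  omega


lemma mc_delete [Finite V] (G : SimpleGraph V) {u b : V} (he : s(u, b) ∈ G.edgeSet)
    (hG' : (G \ fromEdgeSet {s(u, b)}).Connected) :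
    (G \ fromEdgeSet {s(u, b)}).mc + 1 ≤ G.mc := by
  classical
  set G' : SimpleGraph V := G \ fromEdgeSet {s(u, b)} with hG'def
  have hE' : G'.edgeSet = G.edgeSet \ {s(u, b)} := by
    simp [hG'def, edgeSet_sdiff, edgeSet_fromEdgeSet, edgeSet_sdiff_sdiff_isDiag]
  obtain ⟨c', hmc', hcount⟩ := mc_mem G' hG'
  set F : Set ℕ := c' '' G'.edgeSet with hF
  have hFfin : F.Finite := (G'.edgeSet.toFinite).image c'
  set fresh : ℕ := sSup F + 1 with hfresh_def
  have hfresh : fresh ∉ F := by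
    intro h
    have := le_csSup hFfin.bddAbove h
    omega
  set c : Sym2 V → ℕ := fun e0 => if e0 = s(u, b) then fresh else c' e0 with hc
  apply le_mc G
  refine ⟨c, ?_, ?_⟩
  · intro x y
    obtain ⟨w, k, hk⟩ := hmc' x y
    refine ⟨w.mapLe sdiff_le, k, ?_⟩
    intro e0 he0
    have he0' : e0 ∈ w.edges := by
      simpa [Walk.mapLe, Walk.edges_map, Walk.edges_mapLe_eq_edges,
        Sym2.map_id'] using he0
    have hmem : e0 ∈ G'.edgeSet := w.edges_subset_edgeSet he0'
    have hne : e0 ≠ s(u, b) := by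
      rw [hE'] at hmem
      exact hmem.2
    rw [hc]
    simp only [if_neg hne]
    exact hk e0 he0'
  · have hins : G.edgeSet = insert (s(u, b)) G'.edgeSet := by
      rw [hE', Set.insert_diff_singleton, Set.insert_eq_self.mpr he]
    have himg : c '' G'.edgeSet = F := by
      rw [hF]
      apply Set.image_congr
      intro x hx
      have hne : x ≠ s(u, b) := by
        rw [hE'] at hx
        exact hx.2
      simp [hc, if_neg hne]
    rw [hins, Set.image_insert_eq, himg]
    have hce : c s(u, b) = fresh := by simp [hc]
    rw [hce, Set.ncard_insert_of_notMem hfresh hFfin, hcount]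

lemma mc_main [Fintype V] :
    ∀ (G : SimpleGraph V), G.Connected → G.edgeSet.Nonempty →
      G.edgeSet.ncard + 2 ≤ G.mc + Fintype.card V := by
  classical
  have key : ∀ (n : ℕ) (G : SimpleGraph V), G.edgeSet.ncard = n → G.Connected →
      G.edgeSet.Nonempty → G.edgeSet.ncard + 2 ≤ G.mc + Fintype.card V := by
    intro n
    induction n using Nat.strong_induction_on with
    | _ n ih =>
      intro G hcard hG hne
      by_cases hA : G.IsAcyclic
      · have ht : G.IsTree := ⟨hG, hA⟩
        have htc := ht.card_edgeFinset
        rw [edgeFinset] at htc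
        have h1 := one_le_mc G hG hne
        rw [Set.ncard_eq_toFinset_card' G.edgeSet]
        omega
      · rw [isAcyclic_iff_forall_edge_isBridge] at hA
        push_neg at hA
        obtain ⟨e, he, hnb⟩ := hA
        induction e using Sym2.ind with
        | _ u b =>
        have hub : G.Adj u b := G.mem_edgeSet.mp he
        have hG' := delete_connected hG hnb hub
        have hE' : (G \ fromEdgeSet {s(u, b)}).edgeSet = G.edgeSet \ {s(u, b)} := by
          simp [edgeSet_sdiff, edgeSet_fromEdgeSet, edgeSet_sdiff_sdiff_isDiag]
        have hcard' : (G \ fromEdgeSet {s(u, b)}).edgeSet.ncard = n - 1 := by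
          rw [hE', Set.ncard_diff_singleton_of_mem he, hcard]
        have h0 : 0 < n := by
          rw [← hcard]
          exact (Set.ncard_pos G.edgeSet.toFinite).mpr ⟨_, he⟩
        have hne' : (G \ fromEdgeSet {s(u, b)}).edgeSet.Nonempty := by
          rw [← Set.ncard_pos ((G \ fromEdgeSet {s(u, b)}).edgeSet.toFinite), hcard']
          have h2 : 1 < Fintype.card V := Fintype.one_lt_card_iff_nontrivial.mpr
            ⟨⟨u, b, hub.ne⟩⟩
          have := connected_card_le _ hG'
          omega
        have hIH := ih (n-1) (by omega) _ hcard' hG' hne'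
        have hdel := mc_delete G he hG'
        rw [hcard'] at hIH
        omega
  exact fun G hG hne => key G.edgeSet.ncard G rfl hG hne

lemma odd_closed_walk (G : SimpleGraph V) (hG : G.Connected) (hGb : ¬ G.Colorable 2) :
    ∃ (x : V) (w : G.Walk x x), Odd w.length := by
  by_contra hodd
  push_neg at hodd
  apply hGb
  haveI := hG.nonempty
  obtain ⟨r⟩ := hG.nonempty
  refine ⟨Coloring.mk (fun v => ⟨G.dist r v % 2, by omega⟩) ?_⟩
  intro v w hvw hceq
  rw [Fin.mk.injEq] at hceq
  obtain ⟨pv, hpv⟩ := hG.exists_walk_length_eq_dist r v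
  obtain ⟨pw, hpw⟩ := hG.exists_walk_length_eq_dist r w
  have := hodd r (pv.append (Walk.cons hvw pw.reverse))
  rw [Walk.length_append, Walk.length_cons, Walk.length_reverse, hpv, hpw] at this
  rw [Nat.odd_iff] at this
  omega

lemma pump (G : SimpleGraph V) {u v y : V} (w : G.Walk u v) (h : G.Adj v y) (k : ℕ) :
    ∃ w' : G.Walk u v, w'.length = w.length + 2 * k := by
  induction k with
  | zero => exact ⟨w, by omega⟩
  | succ k ih =>
    obtain ⟨w', hw'⟩ := ih
    refine ⟨w'.append (Walk.cons h (Walk.cons h.symm Walk.nil)), ?_⟩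
    rw [Walk.length_append, Walk.length_cons, Walk.length_cons, Walk.length_nil]
    omega

lemma walk_all_lengths (G : SimpleGraph V) (hG : G.Connected)
    (hodd : ∃ (x : V) (w : G.Walk x x), Odd w.length) (u v : V) :
    ∃ N, ∀ L, N ≤ L → ∃ w : G.Walk u v, w.length = L := by
  obtain ⟨x, C0, hC0⟩ := hodd
  obtain ⟨w0⟩ := hG u v
  obtain ⟨q⟩ := hG v x
  set C : G.Walk v v := q.append (C0.append q.reverse) with hC
  have hClen : C.length = C0.length + 2 * q.length := by
    rw [hC, Walk.length_append, Walk.length_append, Walk.length_reverse]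
    omega
  have hCodd : Odd C.length := by
    rw [hClen]
    exact hC0.add_even (even_two_mul _)
  have hCne : C.length ≠ 0 := by
    intro h
    rw [h] at hCodd
    simp at hCodd
  -- get a neighbor of v
  obtain ⟨y, hy⟩ : ∃ y, G.Adj v y := by
    cases hCC : C with
    | nil => rw [hCC] at hCne; simp at hCne
    | cons h p => exact ⟨_, h⟩
  refine ⟨w0.length + C.length, ?_⟩
  intro L hL
  rcases Nat.even_or_odd (L + w0.length) with hpar | hpar
  · obtain ⟨k, hk⟩ : ∃ k, L = w0.length + 2 * k := by
      refine ⟨(L - w0.length) / 2, ?_⟩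
      rw [Nat.even_iff] at hpar
      omega
    obtain ⟨w', hw'⟩ := pump G w0 hy k
    exact ⟨w', by omega⟩
  · obtain ⟨k, hk⟩ : ∃ k, L = (w0.length + C.length) + 2 * k := by
      refine ⟨(L - (w0.length + C.length)) / 2, ?_⟩
      rw [Nat.odd_iff] at hpar hCodd
      omega
    obtain ⟨w', hw'⟩ := pump G (w0.append C) hy k
    rw [Walk.length_append] at hw'
    exact ⟨w', by omega⟩

lemma tensor_reachable {α β : Type*} {G : SimpleGraph α} {H : SimpleGraph β}
    {a b : α} (w1 : G.Walk a b) :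
    ∀ {c d : β} (w2 : H.Walk c d), w1.length = w2.length →
      (G.tensorProd H).Reachable (a, c) (b, d) := by
  induction w1 with
  | nil =>
    intro c d w2 h
    cases w2 with
    | nil => exact Reachable.refl _
    | cons h2 p2 => simp [Walk.length_cons] at h
  | cons h1 p1 ih =>
    intro c d w2 h
    cases w2 with
    | nil => simp [Walk.length_cons] at h
    | cons h2 p2 =>
      refine (Adj.reachable (show (G.tensorProd H).Adj (_, _) (_, _) from ⟨h1, h2⟩)).trans (ih p2 ?_)
      simpa [Walk.length_cons] using h

lemma tensor_connected {α β : Type*} (G : SimpleGraph α) (H : SimpleGraph β)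
    (hG : G.Connected) (hH : H.Connected)
    (hGb : ¬ G.Colorable 2) (hHb : ¬ H.Colorable 2) :
    (G.tensorProd H).Connected := by
  haveI := hG.nonempty
  haveI := hH.nonempty
  refine Connected.mk ?_
  rintro ⟨a, c⟩ ⟨b, d⟩
  obtain ⟨N1, h1⟩ := walk_all_lengths G hG (odd_closed_walk G hG hGb) a b
  obtain ⟨N2, h2⟩ := walk_all_lengths H hH (odd_closed_walk H hH hHb) c d
  obtain ⟨w1, hw1⟩ := h1 (max N1 N2) (le_max_left _ _)
  obtain ⟨w2, hw2⟩ := h2 (max N1 N2) (le_max_right _ _)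
  exact tensor_reachable w1 w2 (by omega)

def tensorDartEquiv {α β : Type*} (G : SimpleGraph α) (H : SimpleGraph β) :
    (G.tensorProd H).Dart ≃ G.Dart × H.Dart where
  toFun d := (⟨(d.fst.1, d.snd.1), d.adj.1⟩, ⟨(d.fst.2, d.snd.2), d.adj.2⟩)
  invFun p := ⟨((p.1.fst, p.2.fst), (p.1.snd, p.2.snd)), ⟨p.1.adj, p.2.adj⟩⟩
  left_inv d := rfl
  right_inv p := rfl

lemma tensor_edge_count {α β : Type*} [Fintype α] [Fintype β]
    (G : SimpleGraph α) (H : SimpleGraph β) :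
    (G.tensorProd H).edgeSet.ncard = 2 * (G.edgeSet.ncard * H.edgeSet.ncard) := by
  classical
  have hP := (G.tensorProd H).dart_card_eq_twice_card_edges
  have hG := G.dart_card_eq_twice_card_edges
  have hH := H.dart_card_eq_twice_card_edges
  have hcongr : Fintype.card (G.tensorProd H).Dart = Fintype.card G.Dart * Fintype.card H.Dart := by
    rw [Fintype.card_congr (tensorDartEquiv G H), Fintype.card_prod]
  rw [hP, hG, hH] at hcongr
  rw [Set.ncard_eq_toFinset_card' (G.tensorProd H).edgeSet,
    Set.ncard_eq_toFinset_card' G.edgeSet, Set.ncard_eq_toFinset_card' H.edgeSet]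
  rw [edgeFinset, edgeFinset, edgeFinset] at hcongr
  nlinarith [hcongr]

lemma edge_nonempty (G : SimpleGraph V) (hGb : ¬ G.Colorable 2) : G.edgeSet.Nonempty := by
  rcases Set.eq_empty_or_nonempty G.edgeSet with he | he
  · exfalso
    apply hGb
    exact ⟨SimpleGraph.Coloring.mk (fun _ => 0) (by
      intro x y hxy
      exact absurd (G.mem_edgeSet.mpr hxy) (he ▸ Set.notMem_empty _))⟩
  · exact he

end MCAux

/-- Corollary 2.4: for connected non-bipartite `G` and `H`, `mc(G × H) ≥ mc(G)·mc(H) + 2`. -/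
theorem mc_tensorProd_lower_bound {α β : Type*} [Fintype α] [Fintype β]
    (G : SimpleGraph α) (H : SimpleGraph β)
    (hG : G.Connected) (hH : H.Connected)
    (hGb : ¬ G.Colorable 2) (hHb : ¬ H.Colorable 2) :
    G.mc * H.mc + 2 ≤ (G.tensorProd H).mc := by
  classical
  obtain ⟨eG, heG⟩ := MCAux.edge_nonempty G hGb
  obtain ⟨eH, heH⟩ := MCAux.edge_nonempty H hHb
  have hPconn : (G.tensorProd H).Connected := MCAux.tensor_connected G H hG hH hGb hHb
  have hPne : (G.tensorProd H).edgeSet.Nonempty := by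
    induction eG using Sym2.ind with
    | _ a b =>
    induction eH using Sym2.ind with
    | _ c d =>
    exact ⟨s((a, c), (b, d)), (G.tensorProd H).mem_edgeSet.mpr
      ⟨G.mem_edgeSet.mp heG, H.mem_edgeSet.mp heH⟩⟩
  have hmain := MCAux.mc_main (G.tensorProd H) hPconn hPne
  have hcount := MCAux.tensor_edge_count G H
  have hcard : Fintype.card (α × β) = Fintype.card α * Fintype.card β := Fintype.card_prod α β
  have haG : G.mc ≤ G.edgeSet.ncard := MCAux.mc_le_ncard G hG
  have hbH : H.mc ≤ H.edgeSet.ncard := MCAux.mc_le_ncard H hH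
  have hnG : Fintype.card α ≤ G.edgeSet.ncard := MCAux.card_le_ncard_of_not_colorable G hG hGb
  have hnH : Fintype.card β ≤ H.edgeSet.ncard := MCAux.card_le_ncard_of_not_colorable H hH hHb
  have hx1 : Fintype.card α * Fintype.card β ≤ G.edgeSet.ncard * H.edgeSet.ncard :=
    Nat.mul_le_mul hnG hnH
  have hx2 : G.mc * H.mc ≤ G.edgeSet.ncard * H.edgeSet.ncard :=
    Nat.mul_le_mul haG hbH
  rw [hcount, hcard] at hmain
  omega
end

section
/- For integers n ≥ 3 and m ≥ 2, the two-dimensional grid graph P_n □ P_m satisfies mc(P_n □ P_m) = nm − n − m + 2. -/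
open SimpleGraph

namespace McGridAux

variable {V : Type*}

lemma walk_start_mem_edge {G : SimpleGraph V} {u v : V} (w : G.Walk u v) (h : u ≠ v) :
    ∃ x, G.Adj u x ∧ s(u, x) ∈ w.edges := by
  cases w with
  | nil => exact absurd rfl h
  | cons h' p => exact ⟨_, h', by simp⟩

lemma walk_end_mem_edge {G : SimpleGraph V} {u v : V} (w : G.Walk u v) (h : u ≠ v) :
    ∃ x, G.Adj v x ∧ s(v, x) ∈ w.edges := by
  obtain ⟨x, hx, he⟩ := walk_start_mem_edge w.reverse (Ne.symm h)
  exact ⟨x, hx, by simpa using he⟩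

lemma eq_sym2_of_walk {G : SimpleGraph V} {u v : V} {e0 : Sym2 V} (w : G.Walk u v) (h : u ≠ v)
    (hall : ∀ e ∈ w.edges, e = e0) : e0 = s(u, v) := by
  obtain ⟨x, hx, hex⟩ := walk_start_mem_edge w h
  obtain ⟨y, hy, hey⟩ := walk_end_mem_edge w h
  have hu : u ∈ e0 := by rw [← hall _ hex]; simp
  have hv : v ∈ e0 := by rw [← hall _ hey]; simp
  induction e0 using Sym2.ind with
  | _ a b =>
    rw [Sym2.mem_iff] at hu hv
    rw [Sym2.eq_iff]
    rcases hu with rfl | rfl <;> rcases hv with rfl | rfl <;> tauto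

lemma exists_pred_dist {G : SimpleGraph V} {r x : V} (hx : G.Reachable r x) (hne : x ≠ r) :
    ∃ y, G.Adj y x ∧ G.dist r y + 1 = G.dist r x ∧ G.Reachable r y := by
  obtain ⟨w, hw⟩ := hx.exists_walk_length_eq_dist
  obtain ⟨y, hadj, p, hp⟩ := w.reverse.exists_eq_cons_of_ne hne
  have hry : G.Reachable r y := ⟨p.reverse⟩
  have h1 : G.dist r y ≤ p.length := by
    simpa using G.dist_le p.reverse
  have h2 : G.dist r x ≤ G.dist r y + 1 := by
    obtain ⟨q, hq⟩ := hry.exists_walk_length_eq_dist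
    have := G.dist_le (q.concat hadj.symm)
    simpa [SimpleGraph.Walk.length_concat, hq] using this
  have h3 : p.length + 1 = G.dist r x := by
    have : w.reverse.length = w.length := w.length_reverse
    rw [hp] at this
    simp at this
    omega
  have hpos : 0 < G.dist r x := hx.pos_dist_of_ne (Ne.symm hne)
  exact ⟨y, hadj.symm, by omega, hry⟩

lemma ncard_reach_le [Fintype V] (G : SimpleGraph V) (r : V) :
    {x | G.Reachable r x}.ncard ≤
      ({e ∈ G.edgeSet | ∀ v ∈ e, G.Reachable r v}).ncard + 1 := by
  classical
  set S : Set V := {x | G.Reachable r x}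
  set T : Set (Sym2 V) := {e ∈ G.edgeSet | ∀ v ∈ e, G.Reachable r v}
  have hsel : ∀ x : V, ∃ y, x ∈ S \ {r} →
      G.Adj y x ∧ G.dist r y + 1 = G.dist r x ∧ G.Reachable r y := by
    intro x
    by_cases hx : x ∈ S \ {r}
    · obtain ⟨hxS, hxr⟩ := hx
      obtain ⟨y, h⟩ := exists_pred_dist hxS hxr
      exact ⟨y, fun _ => h⟩
    · exact ⟨r, fun h => absurd h hx⟩
  choose f hf using hsel
  have hcard : (S \ {r}).ncard ≤ T.ncard := by
    apply Set.ncard_le_ncard_of_injOn (fun x => s(f x, x))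
    · intro a ha
      obtain ⟨hadj, _, hrfa⟩ := hf a ha
      refine ⟨hadj, ?_⟩
      intro v hv
      rw [Sym2.mem_iff] at hv
      rcases hv with rfl | rfl
      · exact hrfa
      · exact ha.1
    · intro a ha b hb hab
      rw [Sym2.eq_iff] at hab
      rcases hab with ⟨h1, h2⟩ | ⟨h1, h2⟩
      · exact h2
      · obtain ⟨_, hda, _⟩ := hf a ha
        obtain ⟨_, hdb, _⟩ := hf b hb
        subst h1
        rw [← h2] at hdb
        exfalso; omega
  have hrS : r ∈ S := Reachable.refl r
  have : S = insert r (S \ {r}) := by simp [Set.insert_diff_singleton, hrS]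
  rw [this, Set.ncard_insert_of_notMem (by simp) ((S \ {r}).toFinite)]
  omega

end McGridAux

namespace McGridAux2

lemma grid_edge_count (n m : ℕ) (hn : 1 ≤ n) (hm : 1 ≤ m) :
    ((pathGraph n).boxProd (pathGraph m)).edgeSet.ncard = (n-1)*m + n*(m-1) := by
  classical
  set G := (pathGraph n).boxProd (pathGraph m) with hG
  set g1 : Fin (n-1) × Fin m → Sym2 (Fin n × Fin m) := fun a =>
    s(((⟨a.1.1, by have := a.1.2; omega⟩ : Fin n), a.2),
      ((⟨a.1.1 + 1, by have := a.1.2; omega⟩ : Fin n), a.2)) with hg1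
  set g2 : Fin n × Fin (m-1) → Sym2 (Fin n × Fin m) := fun a =>
    s((a.1, (⟨a.2.1, by have := a.2.2; omega⟩ : Fin m)),
      (a.1, (⟨a.2.1 + 1, by have := a.2.2; omega⟩ : Fin m))) with hg2
  have hinj1 : Function.Injective g1 := by
    rintro ⟨⟨i, hi⟩, ⟨j, hj⟩⟩ ⟨⟨i', hi'⟩, ⟨j', hj'⟩⟩ h
    simp only [hg1, Sym2.eq_iff, Prod.ext_iff, Fin.ext_iff, Fin.mk.injEq] at h
    simp only [Prod.ext_iff, Fin.ext_iff, Fin.mk.injEq]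
    omega
  have hinj2 : Function.Injective g2 := by
    rintro ⟨⟨i, hi⟩, ⟨j, hj⟩⟩ ⟨⟨i', hi'⟩, ⟨j', hj'⟩⟩ h
    simp only [hg2, Sym2.eq_iff, Prod.ext_iff, Fin.ext_iff, Fin.mk.injEq] at h
    simp only [Prod.ext_iff, Fin.ext_iff, Fin.mk.injEq]
    omega
  have hunion : G.edgeSet = Set.range g1 ∪ Set.range g2 := by
    apply Set.Subset.antisymm
    · intro e he
      induction e using Sym2.ind with
      | _ x y =>
        obtain ⟨a, b⟩ := x
        obtain ⟨c, d⟩ := y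
        rw [SimpleGraph.mem_edgeSet, hG, boxProd_adj] at he
        dsimp only at he
        rcases he with ⟨hac, rfl⟩ | ⟨hbd, rfl⟩
        · rw [pathGraph_adj] at hac
          rcases hac with h | h
          · refine Or.inl ⟨((⟨a.1, by have := c.2; omega⟩ : Fin (n-1)), b), ?_⟩
            simp [hg1, Sym2.eq_iff, Prod.ext_iff, Fin.ext_iff] <;> omega
          · refine Or.inl ⟨((⟨c.1, by have := a.2; omega⟩ : Fin (n-1)), b), ?_⟩
            simp [hg1, Sym2.eq_iff, Prod.ext_iff, Fin.ext_iff] <;> omega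
        · rw [pathGraph_adj] at hbd
          rcases hbd with h | h
          · refine Or.inr ⟨(a, (⟨b.1, by have := d.2; omega⟩ : Fin (m-1))), ?_⟩
            simp [hg2, Sym2.eq_iff, Prod.ext_iff, Fin.ext_iff] <;> omega
          · refine Or.inr ⟨(a, (⟨d.1, by have := b.2; omega⟩ : Fin (m-1))), ?_⟩
            simp [hg2, Sym2.eq_iff, Prod.ext_iff, Fin.ext_iff] <;> omega
    · rintro e (⟨a, rfl⟩ | ⟨a, rfl⟩)
      · rw [SimpleGraph.mem_edgeSet, hG]
        exact Or.inl ⟨pathGraph_adj.mpr (Or.inl rfl), rfl⟩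
      · rw [SimpleGraph.mem_edgeSet, hG]
        exact Or.inr ⟨pathGraph_adj.mpr (Or.inl rfl), rfl⟩
  have hdisj : Disjoint (Set.range g1) (Set.range g2) := by
    rw [Set.disjoint_left]
    rintro e ⟨a, rfl⟩ ⟨b, hb⟩
    simp only [hg1, hg2, Sym2.eq_iff, Prod.ext_iff, Fin.ext_iff] at hb
    omega
  rw [hunion, Set.ncard_union_eq hdisj (Set.toFinite _) (Set.toFinite _)]
  have h1 : (Set.range g1).ncard = (n-1)*m := by
    rw [← Nat.card_coe_set_eq, Nat.card_range_of_injective hinj1,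
      Nat.card_eq_fintype_card]
    simp
  have h2 : (Set.range g2).ncard = n*(m-1) := by
    rw [← Nat.card_coe_set_eq, Nat.card_range_of_injective hinj2,
      Nat.card_eq_fintype_card]
    simp
  rw [h1, h2]

lemma r_adj {n m : ℕ} (hn : 3 ≤ n) (hm : 2 ≤ m) (y : Fin n × Fin m) :
    ((pathGraph n).boxProd (pathGraph m)).Adj (⟨0, by omega⟩, ⟨0, by omega⟩) y ↔
      y = ((⟨1, by omega⟩ : Fin n), (⟨0, by omega⟩ : Fin m)) ∨
      y = ((⟨0, by omega⟩ : Fin n), (⟨1, by omega⟩ : Fin m)) := by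
  obtain ⟨⟨y1, hy1⟩, ⟨y2, hy2⟩⟩ := y
  simp [boxProd_adj, pathGraph_adj, Prod.ext_iff, Fin.ext_iff, Fin.mk.injEq]
  omega

end McGridAux2

namespace McGridAux3

def mcf (n m : ℕ) (a b : Fin n × Fin m) : ℕ :=
  if (a.2 : ℕ) = (b.2 : ℕ) ∧ 1 ≤ (a.2 : ℕ) ∧
      ((a.1 : ℕ) + 1 = (b.1 : ℕ) ∨ (b.1 : ℕ) + 1 = (a.1 : ℕ))
  then 1 + min (a.1 : ℕ) (b.1 : ℕ) + (n-1) * ((a.2 : ℕ) - 1) else 0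

lemma mcf_symm (n m : ℕ) (a b : Fin n × Fin m) : mcf n m a b = mcf n m b a := by
  unfold mcf
  have hmin : min (a.1 : ℕ) (b.1 : ℕ) = min (b.1 : ℕ) (a.1 : ℕ) := Nat.min_comm _ _
  by_cases h : (a.2 : ℕ) = (b.2 : ℕ)
  · rw [h, hmin]
    exact if_congr (by tauto) rfl rfl
  · rw [if_neg (fun hc => h hc.1), if_neg (fun hc => h (hc.1.symm))]

def mcc (n m : ℕ) : Sym2 (Fin n × Fin m) → ℕ :=
  Sym2.lift ⟨mcf n m, mcf_symm n m⟩

@[simp] lemma mcc_mk (n m : ℕ) (a b : Fin n × Fin m) : mcc n m s(a, b) = mcf n m a b := rfl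

lemma mc_lower (n m : ℕ) (hn : 3 ≤ n) (hm : 2 ≤ m) :
    ((pathGraph n).boxProd (pathGraph m)).IsMCColoring (mcc n m) ∧
      (mcc n m '' ((pathGraph n).boxProd (pathGraph m)).edgeSet).ncard = (n-1)*(m-1)+1 := by
  classical
  set G := (pathGraph n).boxProd (pathGraph m) with hG
  set T0 : Set (Sym2 (Fin n × Fin m)) := {e | e ∈ G.edgeSet ∧ mcc n m e = 0} with hT0
  set Ht := fromEdgeSet T0 with hHt
  have hle : Ht ≤ G := by
    rw [hHt, ← fromEdgeSet_edgeSet G]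
    exact fromEdgeSet_mono (fun e he => he.1)
  have hadjT : ∀ x y : Fin n × Fin m, G.Adj x y → mcc n m s(x, y) = 0 → Ht.Adj x y := by
    intro x y h h0
    exact (fromEdgeSet_adj _).mpr ⟨⟨(mem_edgeSet _).mpr h, h0⟩, h.ne⟩
  set r : Fin n × Fin m := ((⟨0, by omega⟩ : Fin n), (⟨0, by omega⟩ : Fin m)) with hr
  have hreach : ∀ x : Fin n × Fin m, Ht.Reachable x r := by
    suffices H : ∀ k (x : Fin n × Fin m), (x.1 : ℕ) + (x.2 : ℕ) = k → Ht.Reachable x r by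
      exact fun x => H _ x rfl
    intro k
    induction k using Nat.strong_induction_on with
    | _ k IH =>
      rintro ⟨⟨x1, h1⟩, ⟨x2, h2⟩⟩ hx
      dsimp only at hx
      by_cases hx2 : 1 ≤ x2
      · set y : Fin n × Fin m := (⟨x1, h1⟩, ⟨x2 - 1, by omega⟩) with hy
        have hadj : G.Adj (⟨x1, h1⟩, ⟨x2, h2⟩) y :=
          boxProd_adj.mpr (Or.inr ⟨pathGraph_adj.mpr (Or.inr (by simp [hy]; omega)), rfl⟩)
        have h0 : mcc n m s((⟨x1, h1⟩, ⟨x2, h2⟩), y) = 0 := by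
          rw [mcc_mk]; unfold mcf
          rw [if_neg]
          rintro ⟨hc, -⟩
          simp only [hy] at hc
          omega
        refine Reachable.trans ⟨(hadjT _ _ hadj h0).toWalk⟩ (IH (k-1) (by omega) y ?_)
        simp only [hy]
        omega
      · by_cases hx1 : 1 ≤ x1
        · set y : Fin n × Fin m := (⟨x1 - 1, by omega⟩, ⟨x2, h2⟩) with hy
          have hadj : G.Adj (⟨x1, h1⟩, ⟨x2, h2⟩) y :=
            boxProd_adj.mpr (Or.inl ⟨pathGraph_adj.mpr (Or.inr (by simp [hy]; omega)), rfl⟩)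
          have h0 : mcc n m s((⟨x1, h1⟩, ⟨x2, h2⟩), y) = 0 := by
            rw [mcc_mk]; unfold mcf
            rw [if_neg]
            rintro ⟨-, hc, -⟩
            simp only [hy] at hc
            omega
          refine Reachable.trans ⟨(hadjT _ _ hadj h0).toWalk⟩ (IH (k-1) (by omega) y ?_)
          simp only [hy]
          omega
        · have : ((⟨x1, h1⟩, ⟨x2, h2⟩) : Fin n × Fin m) = r := by
            rw [hr]; simp [Prod.ext_iff, Fin.ext_iff]; omega
          rw [this]
  constructor
  · intro u v
    obtain ⟨p⟩ := (hreach u).trans (hreach v).symm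
    have hsub : ∀ e ∈ p.edges, e ∈ G.edgeSet := by
      intro e he
      have := p.edges_subset_edgeSet he
      rw [hHt, edgeSet_fromEdgeSet] at this
      exact this.1.1
    refine ⟨p.transfer G hsub, 0, ?_⟩
    intro e he
    rw [SimpleGraph.Walk.edges_transfer] at he
    have := p.edges_subset_edgeSet he
    rw [hHt, edgeSet_fromEdgeSet] at this
    exact this.1.2
  · have himg : mcc n m '' G.edgeSet = Set.Iio ((n-1)*(m-1)+1) := by
      apply Set.Subset.antisymm
      · rintro x ⟨e, he, hce⟩
        induction e using Sym2.ind with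
        | _ a b =>
          rw [mcc_mk] at hce
          subst hce
          simp only [Set.mem_Iio]
          have ha1 := a.1.2
          have ha2 := a.2.2
          have hb1 := b.1.2
          have hb2 := b.2.2
          unfold mcf
          split_ifs with hcond
          · have hmul : (n-1) * ((a.2 : ℕ) - 1) ≤ (n-1)*(m-2) :=
              Nat.mul_le_mul_left _ (by omega)
            have hexp : (n-1)*(m-2) + (n-1) = (n-1)*(m-1) := by
              have h' : m - 1 = (m-2)+1 := by omega
              rw [h', Nat.mul_add, Nat.mul_one]
            omega
          · omega
      · intro x hx
        simp only [Set.mem_Iio] at hx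
        rcases Nat.eq_zero_or_pos x with rfl | hxpos
        · refine ⟨s(r, ((⟨0, by omega⟩ : Fin n), (⟨1, by omega⟩ : Fin m))), ?_, ?_⟩
          · exact (mem_edgeSet _).mpr (boxProd_adj.mpr (Or.inr ⟨pathGraph_adj.mpr (Or.inl (by simp [hr])), rfl⟩))
          · rw [mcc_mk]; unfold mcf
            rw [if_neg]
            rintro ⟨hc, -⟩
            simp only [hr] at hc
            omega
        · set i := (x-1) % (n-1) with hi
          set t := (x-1) / (n-1) with ht
          have hn1 : 0 < n - 1 := by omega
          have hilt : i < n-1 := Nat.mod_lt _ hn1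
          have hdm : (n-1) * t + i = x - 1 := Nat.div_add_mod (x-1) (n-1)
          have htlt : t < m - 1 := by
            rw [ht, Nat.div_lt_iff_lt_mul hn1]
            have hcomm : (n-1)*(m-1) = (m-1)*(n-1) := Nat.mul_comm _ _
            omega
          refine ⟨s(((⟨i, by omega⟩ : Fin n), (⟨t+1, by omega⟩ : Fin m)),
              ((⟨i+1, by omega⟩ : Fin n), (⟨t+1, by omega⟩ : Fin m))), ?_, ?_⟩
          · exact (mem_edgeSet _).mpr (boxProd_adj.mpr (Or.inl ⟨pathGraph_adj.mpr (Or.inl (by simp)), rfl⟩))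
          · rw [mcc_mk]; unfold mcf
            split_ifs with hcond
            · simp only [Nat.add_sub_cancel]
              simp
              omega
            · exfalso; apply hcond; simp
    rw [himg]
    have : Set.Iio ((n-1)*(m-1)+1) = ↑(Finset.range ((n-1)*(m-1)+1)) := by
      ext; simp
    rw [this, Set.ncard_coe_finset, Finset.card_range]

end McGridAux3

namespace McGridAux4

lemma mc_upper (n m : ℕ) (hn : 3 ≤ n) (hm : 2 ≤ m)
    (c : Sym2 (Fin n × Fin m) → ℕ)
    (hc : ((pathGraph n).boxProd (pathGraph m)).IsMCColoring c) :
    (c '' ((pathGraph n).boxProd (pathGraph m)).edgeSet).ncard + n * m ≤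
      ((pathGraph n).boxProd (pathGraph m)).edgeSet.ncard + 2 := by
  classical
  set G := (pathGraph n).boxProd (pathGraph m) with hG
  set r : Fin n × Fin m := (⟨0, by omega⟩, ⟨0, by omega⟩) with hr
  set p : Fin n × Fin m := (⟨1, by omega⟩, ⟨0, by omega⟩) with hp
  set q : Fin n × Fin m := (⟨0, by omega⟩, ⟨1, by omega⟩) with hq
  set z : Fin n × Fin m := (⟨2, by omega⟩, ⟨1, by omega⟩) with hz
  have hadj_r : ∀ y, G.Adj r y ↔ y = p ∨ y = q := McGridAux2.r_adj hn hm
  have hrp : G.Adj r p := (hadj_r p).mpr (Or.inl rfl)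
  have hrq : G.Adj r q := (hadj_r q).mpr (Or.inr rfl)
  set k1 := c s(r, p) with hk1
  set k2 := c s(r, q) with hk2
  set E : ℕ → Set (Sym2 (Fin n × Fin m)) := fun k => {e | e ∈ G.edgeSet ∧ c e = k} with hE
  set H : ℕ → SimpleGraph (Fin n × Fin m) := fun k => fromEdgeSet (E k) with hH
  set S : ℕ → Set (Fin n × Fin m) := fun k => {x | (H k).Reachable r x} with hS
  have hHE : ∀ k, (H k).edgeSet = E k := by
    intro k
    rw [hH]
    rw [edgeSet_fromEdgeSet]
    ext e
    constructor
    · exact fun h => h.1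
    · intro h
      exact ⟨h, fun hd => (G.not_isDiag_of_mem_edgeSet h.1) hd⟩
  have key0 : ∀ (x : Fin n × Fin m) k (w : G.Walk r x), (∀ e ∈ w.edges, c e = k) → x ∈ S k := by
    intro x k w hw
    exact ⟨w.transfer (H k) (fun e he => by
      rw [hHE]; exact ⟨w.edges_subset_edgeSet he, hw e he⟩)⟩
  have hrr : ∀ k, r ∈ S k := fun k => Reachable.refl r
  have hcov : ∀ x, x ∈ S k1 ∨ x ∈ S k2 := by
    intro x
    rcases eq_or_ne x r with rfl | hxr
    · exact Or.inl (hrr k1)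
    obtain ⟨w, k, hk⟩ := hc r x
    obtain ⟨y, hy, hey⟩ := McGridAux.walk_start_mem_edge w (Ne.symm hxr)
    rcases (hadj_r y).mp hy with rfl | rfl
    · left
      apply key0 x k1 w
      intro e he
      rw [hk e he]
      exact (hk _ hey).symm
    · right
      apply key0 x k2 w
      intro e he
      rw [hk e he]
      exact (hk _ hey).symm
  -- Finset bookkeeping
  have hfinE : G.edgeSet.Finite := Set.toFinite _
  set F : Finset (Sym2 (Fin n × Fin m)) := hfinE.toFinset with hF
  have hFE : (F : Set _) = G.edgeSet := hfinE.coe_toFinset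
  set KF : Finset ℕ := F.image c with hKF
  have hKcard : (c '' G.edgeSet).ncard = KF.card := by
    rw [hKF, ← hFE, ← Finset.coe_image, Set.ncard_coe_finset]
  have hMcard : G.edgeSet.ncard = F.card := by rw [← hFE, Set.ncard_coe_finset]
  set Ec : ℕ → ℕ := fun k => (F.filter (fun e => c e = k)).card with hEc
  have hEset : ∀ k, E k = ↑(F.filter (fun e => c e = k)) := by
    intro k
    ext e
    constructor
    · rintro ⟨h1, h2⟩
      exact Finset.mem_coe.mpr (Finset.mem_filter.mpr ⟨hfinE.mem_toFinset.mpr h1, h2⟩)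
    · intro h
      have h' := Finset.mem_filter.mp (Finset.mem_coe.mp h)
      exact ⟨hfinE.mem_toFinset.mp h'.1, h'.2⟩
  have hEcard : ∀ k, (E k).ncard = Ec k := fun k => by
    rw [hEset k, Set.ncard_coe_finset]
  have hsumF : ∑ k ∈ KF, Ec k = F.card :=
    (Finset.card_eq_sum_card_fiberwise (fun e he => Finset.mem_image_of_mem c he)).symm
  have hpos : ∀ k ∈ KF, 1 ≤ Ec k := by
    intro k hk
    obtain ⟨e, he, hce⟩ := Finset.mem_image.mp hk
    exact Finset.card_pos.mpr ⟨e, Finset.mem_filter.mpr ⟨he, hce⟩⟩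
  have hk1K : k1 ∈ KF :=
    Finset.mem_image.mpr ⟨s(r, p), hfinE.mem_toFinset.mpr ((mem_edgeSet _).mpr hrp), rfl⟩
  have hk2K : k2 ∈ KF :=
    Finset.mem_image.mpr ⟨s(r, q), hfinE.mem_toFinset.mpr ((mem_edgeSet _).mpr hrq), rfl⟩
  -- component bounds
  set T : ℕ → Set (Sym2 (Fin n × Fin m)) := fun k => {e | e ∈ E k ∧ ∀ v ∈ e, v ∈ S k} with hT
  have hSbound : ∀ k, (S k).ncard ≤ (T k).ncard + 1 := by
    intro k
    have h := McGridAux.ncard_reach_le (H k) r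
    have h2 : {e | e ∈ (H k).edgeSet ∧ ∀ v ∈ e, (H k).Reachable r v} = T k := by
      ext e
      rw [hHE k]
      exact Iff.rfl
    rw [h2] at h
    exact h
  have hTsub : ∀ k, (T k).ncard ≤ Ec k := fun k => by
    rw [← hEcard]
    exact Set.ncard_le_ncard (fun e he => he.1) (Set.toFinite _)
  rw [hKcard, hMcard]
  by_cases hkk : k1 = k2
  · -- single color at the corner
    have huniv : S k1 = Set.univ := by
      apply Set.eq_univ_of_forall
      intro x
      rcases hcov x with h | h
      · exact h
      · rw [hkk]; exact h
    have hnm : (S k1).ncard = n * m := by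
      rw [huniv, Set.ncard_univ]
      simp [Nat.card_eq_fintype_card]
    have h1 : n * m ≤ Ec k1 + 1 := by
      have := hSbound k1
      have := hTsub k1
      omega
    have hers : (KF.erase k1).card ≤ ∑ k ∈ KF.erase k1, Ec k := by
      rw [Finset.card_eq_sum_ones]
      exact Finset.sum_le_sum (fun i hi => hpos i (Finset.mem_of_mem_erase hi))
    have hsplit : ∑ k ∈ KF.erase k1, Ec k + Ec k1 = F.card := by
      rw [← hsumF, Finset.sum_erase_add]
      exact hk1K
    have hce : (KF.erase k1).card = KF.card - 1 := Finset.card_erase_of_mem hk1K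
    have hK1 : 1 ≤ KF.card := Finset.card_pos.mpr ⟨k1, hk1K⟩
    omega
  · -- two colors at the corner
    have hq2 : q ∈ S k2 := by
      apply key0 q k2 hrq.toWalk
      intro e he
      have : e = s(r, q) := by simpa [SimpleGraph.Adj.toWalk] using he
      rw [this]
    have hp1 : p ∈ S k1 := by
      apply key0 p k1 hrp.toWalk
      intro e he
      have : e = s(r, p) := by simpa [SimpleGraph.Adj.toWalk] using he
      rw [this]
    have hScov : S k1 ∪ S k2 = Set.univ := Set.eq_univ_of_forall (fun x => hcov x)
    have hsum12 : (S k1).ncard + (S k2).ncard = n * m + (S k1 ∩ S k2).ncard := by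
      rw [← Set.ncard_union_add_ncard_inter (S k1) (S k2) (Set.toFinite _) (Set.toFinite _),
        hScov, Set.ncard_univ]
      have : Nat.card (Fin n × Fin m) = n * m := by simp
      omega
    have hinterpos : 1 ≤ (S k1 ∩ S k2).ncard := by
      have hmem : r ∈ S k1 ∩ S k2 := ⟨hrr k1, hrr k2⟩
      have := (Set.ncard_pos (Set.toFinite _)).mpr ⟨r, hmem⟩
      omega
    have hpairsub : ({k1, k2} : Finset ℕ) ⊆ KF := by
      intro k hk
      rcases Finset.mem_insert.mp hk with rfl | hk
      · exact hk1K
      · rw [Finset.mem_singleton.mp hk]; exact hk2K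
    have hsplit2 : ∑ k ∈ KF \ {k1, k2}, Ec k + (Ec k1 + Ec k2) = F.card := by
      rw [← hsumF, ← Finset.sum_sdiff hpairsub]
      congr 1
      rw [Finset.sum_pair hkk]
    have hrestcard : (KF \ {k1, k2}).card ≤ ∑ k ∈ KF \ {k1, k2}, Ec k := by
      rw [Finset.card_eq_sum_ones]
      exact Finset.sum_le_sum (fun i hi => hpos i (Finset.mem_sdiff.mp hi).1)
    have hsdcard : (KF \ {k1, k2}).card = KF.card - 2 := by
      rw [Finset.card_sdiff_of_subset hpairsub, Finset.card_pair hkk]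
    have hKF2 : 2 ≤ KF.card := by
      have := Finset.card_le_card hpairsub
      rwa [Finset.card_pair hkk] at this
    have hS1 := hSbound k1
    have hS2 := hSbound k2
    have hT1 := hTsub k1
    have hT2 := hTsub k2
    by_cases hslack1 : 2 ≤ (S k1 ∩ S k2).ncard
    · omega
    by_cases hslack2 : (T k1).ncard + 1 ≤ Ec k1 ∨ (T k2).ncard + 1 ≤ Ec k2
    · rcases hslack2 with h | h <;> omega
    by_cases hslack3 : ∃ k0 ∈ KF \ ({k1, k2} : Finset ℕ), 2 ≤ Ec k0
    · obtain ⟨k0, hk0, h2k0⟩ := hslack3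
      have hsp : ∑ k ∈ (KF \ {k1, k2}).erase k0, Ec k + Ec k0 = ∑ k ∈ KF \ {k1, k2}, Ec k :=
        Finset.sum_erase_add _ _ hk0
      have her2 : ((KF \ {k1, k2}).erase k0).card ≤ ∑ k ∈ (KF \ {k1, k2}).erase k0, Ec k := by
        rw [Finset.card_eq_sum_ones]
        exact Finset.sum_le_sum (fun i hi =>
          hpos i (Finset.mem_sdiff.mp (Finset.mem_of_mem_erase hi)).1)
      have hec : ((KF \ {k1, k2}).erase k0).card = (KF \ {k1, k2}).card - 1 :=
        Finset.card_erase_of_mem hk0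
      have hne0 : 1 ≤ (KF \ {k1, k2}).card := Finset.card_pos.mpr ⟨k0, hk0⟩
      omega
    -- rigidity: contradiction
    exfalso
    push_neg at hslack1 hslack2 hslack3
    have hinter : S k1 ∩ S k2 = {r} := by
      refine (Set.eq_of_subset_of_ncard_le ?_ ?_ (Set.toFinite _)).symm
      · exact Set.singleton_subset_iff.mpr ⟨hrr k1, hrr k2⟩
      · rw [Set.ncard_singleton]
        omega
    have hclosed : ∀ k', k' = k1 ∨ k' = k2 → ∀ e ∈ E k', ∀ v ∈ e, v ∈ S k' := by
      intro k' hk' e he v hv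
      have hle : Ec k' ≤ (T k').ncard := by
        rcases hk' with rfl | rfl
        · omega
        · omega
      have hTE : T k' = E k' := by
        apply Set.eq_of_subset_of_ncard_le (fun e he => he.1) _ (Set.toFinite _)
        rw [hEcard]
        exact hle
      rw [← hTE] at he
      exact he.2 v hv
    have hsingle : ∀ k', k' ∈ KF → k' ≠ k1 → k' ≠ k2 → ∃ e0, E k' = {e0} := by
      intro k' hkK h1 h2
      have hmem : k' ∈ KF \ ({k1, k2} : Finset ℕ) :=
        Finset.mem_sdiff.mpr ⟨hkK, by simp [h1, h2]⟩
      have hle1 : Ec k' ≤ 1 := by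
        have := hslack3 k' hmem
        omega
      have : (E k').ncard = 1 := by
        have := hpos k' hkK
        rw [hEcard]
        omega
      exact Set.ncard_eq_one.mp this
  -- the main pair contradiction
    have main : ∀ ka kb (u v : Fin n × Fin m), ka ≠ kb → (ka = k1 ∨ ka = k2) →
        (kb = k1 ∨ kb = k2) → u ∈ S ka → v ∈ S kb → u ∉ S kb → v ∉ S ka →
        u ≠ v → ¬G.Adj u v → False := by
      intro ka kb u v hab hka hkb huS hvS huN hvN huv hnadj
      obtain ⟨w, k, hk⟩ := hc u v
      obtain ⟨y0, hy0, hey0⟩ := McGridAux.walk_start_mem_edge w huv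
      obtain ⟨y1, hy1, hey1⟩ := McGridAux.walk_end_mem_edge w huv
      have hedge : ∀ e ∈ w.edges, e ∈ E k := fun e he =>
        ⟨w.edges_subset_edgeSet he, hk e he⟩
      by_cases hka' : k = ka
      · subst hka'
        exact hvN (hclosed k hka _ (hedge _ hey1) v (by simp))
      by_cases hkb' : k = kb
      · subst hkb'
        exact huN (hclosed k hkb _ (hedge _ hey0) u (by simp))
      have hkK : k ∈ KF :=
        Finset.mem_image.mpr ⟨s(u, y0), hfinE.mem_toFinset.mpr (hedge _ hey0).1, hk _ hey0⟩
      have hne1 : k ≠ k1 := by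
        rcases hka with rfl | rfl
        · exact hka'
        · rcases hkb with rfl | rfl
          · exact hkb'
          · exact absurd rfl hab
      have hne2 : k ≠ k2 := by
        rcases hka with rfl | rfl
        · rcases hkb with rfl | rfl
          · exact absurd rfl hab
          · exact hkb'
        · exact hka'
      obtain ⟨e0, he0⟩ := hsingle k hkK hne1 hne2
      have hall : ∀ e ∈ w.edges, e = e0 := by
        intro e he
        have := hedge e he
        rw [he0] at this
        exact this
      have heuv : e0 = s(u, v) := McGridAux.eq_sym2_of_walk w huv hall
      have he0E : e0 ∈ G.edgeSet := by
        have : e0 ∈ E k := by rw [he0]; exact rfl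
        exact this.1
      rw [heuv] at he0E
      exact hnadj ((mem_edgeSet _).mp he0E)
    have hzr : z ≠ r := by
      rw [hz, hr]
      simp [Prod.ext_iff, Fin.ext_iff]
    have hqr : q ≠ r := by
      rw [hq, hr]
      simp [Prod.ext_iff, Fin.ext_iff]
    have hpr : p ≠ r := by
      rw [hp, hr]
      simp [Prod.ext_iff, Fin.ext_iff]
    have hzq : z ≠ q := by
      rw [hz, hq]
      simp [Prod.ext_iff, Fin.ext_iff]
    have hzp : z ≠ p := by
      rw [hz, hp]
      simp [Prod.ext_iff, Fin.ext_iff]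
    have hnzq : ¬G.Adj z q := by
      rw [hz, hq]
      intro had
      rcases boxProd_adj.mp had with ⟨ha, hb⟩ | ⟨ha, hb⟩
      · rw [pathGraph_adj] at ha
        simp at ha
      · simp [Fin.ext_iff] at hb
    have hnzp : ¬G.Adj z p := by
      rw [hz, hp]
      intro had
      rcases boxProd_adj.mp had with ⟨ha, hb⟩ | ⟨ha, hb⟩
      · simp [Fin.ext_iff] at hb
      · simp [Fin.ext_iff] at hb
    rcases hcov z with hz1 | hz2
    · refine main k1 k2 z q hkk (Or.inl rfl) (Or.inr rfl) hz1 hq2 ?_ ?_ hzq hnzq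
      · intro hzS
        have : z ∈ S k1 ∩ S k2 := ⟨hz1, hzS⟩
        rw [hinter] at this
        exact hzr this
      · intro hqS
        have : q ∈ S k1 ∩ S k2 := ⟨hqS, hq2⟩
        rw [hinter] at this
        exact hqr this
    · refine main k2 k1 z p (Ne.symm hkk) (Or.inr rfl) (Or.inl rfl) hz2 hp1 ?_ ?_ hzp hnzp
      · intro hzS
        have : z ∈ S k1 ∩ S k2 := ⟨hzS, hz2⟩
        rw [hinter] at this
        exact hzr this
      · intro hpS
        have : p ∈ S k1 ∩ S k2 := ⟨hp1, hpS⟩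
        rw [hinter] at this
        exact hpr this

end McGridAux4


/-- Proposition 3.1(i): for `n ≥ 3`, `m ≥ 2`, `mc(P_n □ P_m) = nm - n - m + 2`. -/
theorem mc_grid (n m : ℕ) (hn : 3 ≤ n) (hm : 2 ≤ m) :
    ((pathGraph n).boxProd (pathGraph m)).mc = n * m - n - m + 2 := by
  classical
  have harith : (n-1)*(m-1)+1 = n * m - n - m + 2 := by
    obtain ⟨a, rfl⟩ : ∃ a, n = a + 3 := ⟨n - 3, by omega⟩
    obtain ⟨b, rfl⟩ : ∃ b, m = b + 2 := ⟨m - 2, by omega⟩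
    have h1 : (a + 3) * (b + 2) = a*b + 2*a + 3*b + 6 := by ring
    have h2 : (a + 3 - 1) * (b + 2 - 1) = a*b + a + 2*b + 2 := by
      have e1 : a + 3 - 1 = a + 2 := by omega
      have e2 : b + 2 - 1 = b + 1 := by omega
      rw [e1, e2]; ring
    omega
  have hedge : ((pathGraph n).boxProd (pathGraph m)).edgeSet.ncard = (n-1)*m + n*(m-1) :=
    McGridAux2.grid_edge_count n m (by omega) (by omega)
  obtain ⟨hmc0, hcount⟩ := McGridAux3.mc_lower n m hn hm
  have hmemb : ∃ c : Sym2 (Fin n × Fin m) → ℕ,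
      ((pathGraph n).boxProd (pathGraph m)).IsMCColoring c ∧
      (c '' ((pathGraph n).boxProd (pathGraph m)).edgeSet).ncard = n * m - n - m + 2 :=
    ⟨McGridAux3.mcc n m, hmc0, by rw [hcount]; exact harith⟩
  have hub : ∀ x : ℕ, (∃ c : Sym2 (Fin n × Fin m) → ℕ,
      ((pathGraph n).boxProd (pathGraph m)).IsMCColoring c ∧
      (c '' ((pathGraph n).boxProd (pathGraph m)).edgeSet).ncard = x) →
      x ≤ n * m - n - m + 2 := by
    rintro x ⟨c, hcmc, rfl⟩
    have h := McGridAux4.mc_upper n m hn hm c hcmc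
    rw [hedge] at h
    obtain ⟨a, rfl⟩ : ∃ a, n = a + 3 := ⟨n - 3, by omega⟩
    obtain ⟨b, rfl⟩ : ∃ b, m = b + 2 := ⟨m - 2, by omega⟩
    have h1 : (a + 3) * (b + 2) = a*b + 2*a + 3*b + 6 := by ring
    have h2 : (a + 3 - 1) * (b + 2) = a*b + 2*a + 2*b + 4 := by
      have e1 : a + 3 - 1 = a + 2 := by omega
      rw [e1]; ring
    have h3 : (a + 3) * (b + 2 - 1) = a*b + a + 3*b + 3 := by
      have e2 : b + 2 - 1 = b + 1 := by omega
      rw [e2]; ring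
    omega
  rw [SimpleGraph.mc]
  apply le_antisymm
  · exact csSup_le ⟨_, hmemb⟩ (fun x hx => hub x hx)
  · exact le_csSup ⟨n * m - n - m + 2, fun x hx => hub x hx⟩ hmemb
end
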